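/- arXiv:2008.07797 — 5 statements merged into one kernel-verified Lean document; each statement's English description precedes it below -/
import Mathlib

section
/- Let N be a rooted phylogenetic network on a finite set X and let Ñ be its normalisation. If p is a directed path from u to v in Ñ, then there is a directed path in N from u to v that includes all the vertices of p (and possibly additional vertices). -/
/-!
Formalisation framework for rooted phylogenetic networks.

A network is represented as a directed graph on an ambient vertex type `V`:
a vertex set `verts`, a root vertex `root`, and an arc relation `arc`.
-/

structure Net (V : Type*) where
  verts : Set V
  root : V
  arc : V → V → Prop

namespace Net

variable {V : Type*} {W : Type*}

/-- `N.reach u v` means there is a (possibly empty) directed path from `u` to `v`. -/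
def reach (N : Net V) : V → V → Prop := Relation.ReflTransGen N.arc

/-- The in-degree of a vertex. -/
noncomputable def inDeg (N : Net V) (v : V) : ℕ := {u | N.arc u v}.ncard

/-- The out-degree of a vertex. -/
noncomputable def outDeg (N : Net V) (v : V) : ℕ := {w | N.arc v w}.ncard

/-- The leaves of `N`: the vertices of out-degree 0. -/
def leaves (N : Net V) : Set V := {v ∈ N.verts | N.outDeg v = 0}

/-- `N.IsPathFrom u v l` : the list `l` is a directed path in `N` from `u` to `v`
(consecutive entries joined by arcs; a one-element list is the empty path). -/
def IsPathFrom (N : Net V) (u v : V) (l : List V) : Prop :=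
  l.Chain' N.arc ∧ l.head? = some u ∧ l.getLast? = some v

/-- A vertex is visible if some leaf is such that every directed path from the
root to that leaf passes through the vertex. -/
def Visible (N : Net V) (x : V) : Prop :=
  x ∈ N.verts ∧ ∃ y ∈ N.leaves, ∀ l : List V, N.IsPathFrom N.root y l → x ∈ l

/-- A subdividing vertex is one of in-degree 1 and out-degree 1. -/
def Subdividing (N : Net V) (v : V) : Prop := N.inDeg v = 1 ∧ N.outDeg v = 1

/-- The digraph `Cov(N)` on the visible vertices of `N`: an arc `(u,v)` whenever
`u ≠ v`, `u →_N v`, and no visible vertex lies strictly between `u` and `v`. -/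
def cov (N : Net V) : Net V where
  verts := {v | N.Visible v}
  root := N.root
  arc u v := N.Visible u ∧ N.Visible v ∧ u ≠ v ∧ N.reach u v ∧
    ¬ ∃ w, N.Visible w ∧ w ≠ u ∧ w ≠ v ∧ N.reach u w ∧ N.reach w v

/-- The normalisation `Ñ` of `N`: obtained from `Cov(N)` by suppressing every
subdividing vertex.  Its vertices are the visible vertices of `N` that are not
subdividing in `Cov(N)`, with an arc `(u,v)` whenever `Cov(N)` has a directed path
from `u` to `v` (of length at least one) all of whose interior vertices are
subdividing in `Cov(N)`. -/
def normalise (N : Net V) : Net V where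
  verts := {v | N.Visible v ∧ ¬ N.cov.Subdividing v}
  root := N.root
  arc u v := (N.Visible u ∧ ¬ N.cov.Subdividing u) ∧ (N.Visible v ∧ ¬ N.cov.Subdividing v) ∧
    ∃ l : List V, N.cov.IsPathFrom u v l ∧ 2 ≤ l.length ∧
      ∀ w ∈ l.tail.dropLast, N.cov.Subdividing w

/-- `N` is a rooted phylogenetic network on the finite nonempty leaf set `X`. -/
structure IsPhylo (N : Net V) (X : Set V) : Prop where
  finite : N.verts.Finite
  nonempty : X.Nonempty
  arc_mem : ∀ ⦃u v : V⦄, N.arc u v → u ∈ N.verts ∧ v ∈ N.verts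
  acyclic : ∀ ⦃u v : V⦄, N.arc u v → ¬ N.reach v u
  root_mem : N.root ∈ N.verts
  root_inDeg : N.inDeg N.root = 0
  root_unique : ∀ v ∈ N.verts, N.inDeg v = 0 → v = N.root
  leaves_eq : N.leaves = X
  leaf_inDeg : ∀ x ∈ X, N.inDeg x = 1
  interior_deg : ∀ v ∈ N.verts, v ≠ N.root → v ∉ X →
    (N.inDeg v = 1 ∧ 2 ≤ N.outDeg v) ∨ (N.outDeg v = 1 ∧ 2 ≤ N.inDeg v)

/-- `N` has no shortcuts: no arc `(u,v)` such that there is also a directed path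
from `u` to `v` of length at least 2 (i.e. a path-list with at least 3 entries). -/
def NoShortcuts (N : Net V) : Prop :=
  ∀ u v : V, N.arc u v → ¬ ∃ l : List V, N.IsPathFrom u v l ∧ 3 ≤ l.length

/-- Tree-child: every vertex is visible. -/
def TreeChild (N : Net V) : Prop := ∀ v ∈ N.verts, N.Visible v

/-- Normal: tree-child with no shortcuts. -/
def Normal (N : Net V) : Prop := N.TreeChild ∧ N.NoShortcuts

/-- A tree: every vertex has in-degree at most 1. -/
def IsTree (N : Net V) : Prop := ∀ v ∈ N.verts, N.inDeg v ≤ 1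

/-- The cluster of `v`: the set of leaves reachable from `v`. -/
def cluster (N : Net V) (v : V) : Set V := {x ∈ N.leaves | N.reach v x}

/-- The identifying set of `v`: the set of leaves `x` such that every directed
path from the root to `x` passes through `v`. -/
def ident (N : Net V) (v : V) : Set V :=
  {x ∈ N.leaves | ∀ l : List V, N.IsPathFrom N.root x l → v ∈ l}

/-- A digraph isomorphism between two networks, given by the map `f`. -/
def NetEquiv (M : Net V) (M' : Net W) (f : V → W) : Prop :=
  Set.BijOn f M.verts M'.verts ∧
    ∀ u ∈ M.verts, ∀ v ∈ M.verts, (M.arc u v ↔ M'.arc (f u) (f v))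

/-- Two networks over the same ambient type are equivalent relative to a leaf set
`X` if there is a digraph isomorphism between them fixing each element of `X`. -/
def EquivOn (M M' : Net V) (X : Set V) : Prop :=
  ∃ f : V → V, NetEquiv M M' f ∧ ∀ x ∈ X, f x = x

/-- `N₁ ⊕ N₂` : disjoint copies of `N₁` and `N₂` under a new root (`none`). -/
def oplus {V₁ V₂ : Type*} (N₁ : Net V₁) (N₂ : Net V₂) : Net (Option (V₁ ⊕ V₂)) where
  verts := insert none
    ((fun v => some (Sum.inl v)) '' N₁.verts ∪ (fun v => some (Sum.inr v)) '' N₂.verts)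
  root := none
  arc a b :=
    match a, b with
    | none, some (Sum.inl w) => w = N₁.root
    | none, some (Sum.inr w) => w = N₂.root
    | some (Sum.inl u), some (Sum.inl w) => N₁.arc u w
    | some (Sum.inr u), some (Sum.inr w) => N₂.arc u w
    | _, _ => False

/-- `N₁ ⊗ N₂` : identify each leaf `x` of `N₁` with the root of its own copy of `N₂`;
the copy of a non-leaf vertex `u` of `N₁` is `Sum.inl u`, and the vertex `w` of the
copy of `N₂` attached at leaf `x` of `N₁` is `Sum.inr (x, w)`. -/
def otimes {V₁ V₂ : Type*} (N₁ : Net V₁) (N₂ : Net V₂) : Net (V₁ ⊕ V₁ × V₂) where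
  verts := Sum.inl '' (N₁.verts \ N₁.leaves) ∪ Sum.inr '' (N₁.leaves ×ˢ N₂.verts)
  root := Sum.inl N₁.root
  arc a b :=
    match a, b with
    | Sum.inl u, Sum.inl w => N₁.arc u w ∧ w ∉ N₁.leaves
    | Sum.inl u, Sum.inr (x, w) => x ∈ N₁.leaves ∧ N₁.arc u x ∧ w = N₂.root
    | Sum.inr (x, w), Sum.inr (x', w') => x = x' ∧ x ∈ N₁.leaves ∧ N₂.arc w w'
    | _, _ => False

end Net

/-- A hierarchy: a collection of sets any two of which are disjoint or nested. -/
def IsHierarchy {V : Type*} (C : Set (Set V)) : Prop :=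
  ∀ A ∈ C, ∀ B ∈ C, A ∩ B = ∅ ∨ A ⊆ B ∨ B ⊆ A

namespace Net

lemma reach_path' {V : Type*} (N : Net V) {u v : V} (h : N.reach u v) :
    ∃ q : List V, N.IsPathFrom u v q := by
  induction h with
  | refl => exact ⟨[u], List.isChain_singleton u, rfl, rfl⟩
  | @tail b c _ hbc ih =>
    obtain ⟨q, hq, hh, hl⟩ := ih
    refine ⟨q ++ [c], ?_, ?_, ?_⟩
    · refine List.isChain_append.mpr ?_
      refine ⟨hq, List.isChain_singleton _, ?_⟩
      intro x hx y hy
      simp only [List.head?_cons, Option.mem_def, Option.some.injEq] at hy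
      rw [hl] at hx
      simp only [Option.mem_def, Option.some.injEq] at hx
      subst hx; subst hy; exact hbc
    · cases q with
      | nil => simp at hh
      | cons a t => simpa using hh
    · simp

lemma chain_reach' {V : Type*} (N : Net V) {r : V → V → Prop}
    (hr : ∀ x y, r x y → N.reach x y) :
    ∀ l : List V, ∀ u v : V, l.Chain' r → l.head? = some u → l.getLast? = some v →
      N.reach u v := by
  intro l
  induction l with
  | nil => intro u v _ h; simp at h
  | cons a t ih =>
    intro u v hc hh hl
    simp only [List.head?_cons, Option.some.injEq] at hh
    subst hh
    cases t with
    | nil =>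
      simp only [List.getLast?_singleton, Option.some.injEq] at hl
      subst hl; exact Relation.ReflTransGen.refl
    | cons b s =>
      have h1 : r a b := (List.isChain_cons_cons.mp hc).1
      have h2 := ih b v (List.isChain_cons_cons.mp hc).2 rfl (by simpa using hl)
      exact (hr a b h1).trans h2

lemma path_glue' {V : Type*} (N : Net V) {u v w : V} {q₁ q₂ : List V}
    (h₁ : N.IsPathFrom u v q₁) (h₂ : N.IsPathFrom v w q₂) :
    ∃ q, N.IsPathFrom u w q ∧ (∀ x ∈ q₁, x ∈ q) ∧ (∀ x ∈ q₂, x ∈ q) := by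
  obtain ⟨hc₁, hh₁, hl₁⟩ := h₁
  obtain ⟨hc₂, hh₂, hl₂⟩ := h₂
  cases q₂ with
  | nil => simp at hh₂
  | cons b t =>
    simp only [List.head?_cons, Option.some.injEq] at hh₂
    subst hh₂
    have hq₁ne : q₁ ≠ [] := by
      intro h; subst h; simp at hh₁
    have hvmem : b ∈ q₁ := by
      have := List.mem_getLast?_eq_getLast (l := q₁) hl₁
      obtain ⟨h', heq⟩ := this
      rw [heq]; exact List.getLast_mem h'
    refine ⟨q₁ ++ t, ⟨?_, ?_, ?_⟩, ?_, ?_⟩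
    · refine List.isChain_append.mpr ?_
      refine ⟨hc₁, (List.isChain_cons.mp hc₂).2, ?_⟩
      intro x hx y hy
      rw [hl₁] at hx
      simp only [Option.mem_def, Option.some.injEq] at hx
      subst hx
      exact (List.isChain_cons.mp hc₂).1 y hy
    · cases q₁ with
      | nil => simp at hh₁
      | cons a s => simpa using hh₁
    · cases t with
      | nil =>
        simp only [List.getLast?_singleton, Option.some.injEq] at hl₂
        subst hl₂
        simpa using hl₁
      | cons c s =>
        rw [List.getLast?_append_cons]
        simpa using hl₂
    · intro x hx; exact List.mem_append_left _ hx
    · intro x hx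
      rcases List.mem_cons.mp hx with rfl | hx
      · exact List.mem_append_left _ hvmem
      · exact List.mem_append_right _ hx

end Net

/-- If `p` is a directed path from `u` to `v` in the normalisation `Ñ`
of a rooted phylogenetic network `N`, then there is a directed path in `N` from `u`
to `v` that includes all the vertices of `p` (and possibly additional vertices). -/
theorem stmt0 {V : Type*} (N : Net V) (X : Set V) (hN : N.IsPhylo X)
    (u v : V) (p : List V) (hp : N.normalise.IsPathFrom u v p) :
    ∃ q : List V, N.IsPathFrom u v q ∧ ∀ w ∈ p, w ∈ q := by
  clear hN
  have harc : ∀ x y : V, N.normalise.arc x y → ∃ q, N.IsPathFrom x y q := by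
    intro x y hxy
    obtain ⟨_, _, l, ⟨hcl, hhl, hll⟩, _, _⟩ := hxy
    have hreach : N.reach x y :=
      N.chain_reach' (fun a b hab => hab.2.2.2.1) l x y hcl hhl hll
    exact N.reach_path' hreach
  induction p generalizing u with
  | nil => obtain ⟨_, hh, _⟩ := hp; simp [Net.IsPathFrom] at hh
  | cons a t ih =>
    obtain ⟨hc, hh, hl⟩ := hp
    simp only [List.head?_cons, Option.some.injEq] at hh
    subst hh
    cases t with
    | nil =>
      simp only [List.getLast?_singleton, Option.some.injEq] at hl
      subst hl
      exact ⟨[a], ⟨List.isChain_singleton a, rfl, rfl⟩, by simp⟩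
    | cons b s =>
      have h1 : N.normalise.arc a b := (List.isChain_cons_cons.mp hc).1
      have hp' : N.normalise.IsPathFrom b v (b :: s) :=
        ⟨(List.isChain_cons_cons.mp hc).2, rfl, by simpa using hl⟩
      obtain ⟨q₂, hq₂, hq₂mem⟩ := ih b hp'
      obtain ⟨q₁, hq₁⟩ := harc a b h1
      obtain ⟨q, hq, hm₁, hm₂⟩ := N.path_glue' hq₁ hq₂
      refine ⟨q, hq, ?_⟩
      intro w hw
      rcases List.mem_cons.mp hw with rfl | hw
      · have : w ∈ q₁ := by
          obtain ⟨_, hh₁, _⟩ := hq₁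
          cases q₁ with
          | nil => simp at hh₁
          | cons c s' =>
            simp only [List.head?_cons, Option.some.injEq] at hh₁
            subst hh₁; exact List.mem_cons_self
        exact hm₁ _ this
      · exact hm₂ _ (hq₂mem _ hw)
end

section
/- Let N be a rooted phylogenetic network on a finite set X. The normalisation Ñ of N has no shortcuts; that is, Ñ contains no arc (u,v) for which Ñ also contains a directed path from u to v of length at least 2. -/
section AuxShortcut
open Net

variable {V : Type*}

/-- From a chain, the head reaches every member. -/
lemma NetAux.chain_reach_head (M : Net V) : ∀ (l : List V), l.Chain' M.arc →
    ∀ a, l.head? = some a → ∀ x ∈ l, M.reach a x := by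
  intro l
  induction l with
  | nil => intro _ a ha; simp at ha
  | cons c t ih =>
    intro h a ha x hx
    simp only [List.head?_cons, Option.some_inj] at ha
    subst ha
    rcases List.mem_cons.1 hx with rfl | hx
    · exact Relation.ReflTransGen.refl
    · cases t with
      | nil => simp at hx
      | cons d t' =>
        have harc : M.arc c d := (List.isChain_cons_cons.1 h).1
        have := ih (List.isChain_cons_cons.1 h).2 d rfl x hx
        exact Relation.ReflTransGen.head harc this

/-- From a chain, every member reaches the last element. -/
lemma NetAux.chain_reach_last (M : Net V) : ∀ (l : List V), l.Chain' M.arc →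
    ∀ b, l.getLast? = some b → ∀ x ∈ l, M.reach x b := by
  intro l
  induction l with
  | nil => intro _ b hb; simp at hb
  | cons c t ih =>
    intro h b hb x hx
    cases t with
    | nil =>
      simp only [List.getLast?_singleton, Option.some_inj] at hb
      subst hb
      simp only [List.mem_singleton] at hx
      subst hx; exact Relation.ReflTransGen.refl
    | cons d t' =>
      rw [List.getLast?_cons_cons] at hb
      rcases List.mem_cons.1 hx with rfl | hx
      · have harc : M.arc x d := (List.isChain_cons_cons.1 h).1
        have := ih (List.isChain_cons_cons.1 h).2 b hb d (List.mem_cons_self)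
        exact Relation.ReflTransGen.head harc this
      · exact ih (List.isChain_cons_cons.1 h).2 b hb x hx

lemma NetAux.reach_of_path (M : Net V) {a b : V} {l : List V} (h : M.IsPathFrom a b l) :
    M.reach a b := by
  obtain ⟨hc, hh, hg⟩ := h
  have ha : a ∈ l := by
    cases l with
    | nil => simp at hh
    | cons c t =>
      simp only [List.head?_cons, Option.some_inj] at hh
      subst hh; exact List.mem_cons_self
  exact NetAux.chain_reach_last M l hc b hg a ha

/-- Realize reach as a path. -/
lemma NetAux.reach_path (M : Net V) {a b : V} (h : M.reach a b) :
    ∃ l, M.IsPathFrom a b l := by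
  induction h with
  | refl => exact ⟨[a], by simp [Net.IsPathFrom, List.Chain']⟩
  | @tail m c ham harc ih =>
    obtain ⟨l, hc, hh, hg⟩ := ih
    have hlne : l ≠ [] := by rintro rfl; simp at hh
    refine ⟨l ++ [c], ?_, ?_, ?_⟩
    · refine List.isChain_append.2 ⟨hc, List.isChain_singleton _, ?_⟩
      intro x hx y hy
      simp only [List.head?_cons, Option.mem_def, Option.some_inj] at hy
      subst hy
      have : x = m := by rw [Option.mem_def, hg] at hx; exact (Option.some_inj.1 hx).symm
      subst this; exact harc
    · rw [List.head?_append_of_ne_nil _ hlne]; exact hh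
    · rw [List.getLast?_append_of_ne_nil _ (by simp)]; simp

/-- Concatenate two paths. -/
lemma NetAux.path_trans (M : Net V) {a b c : V} {l₁ l₂ : List V}
    (h₁ : M.IsPathFrom a b l₁) (h₂ : M.IsPathFrom b c l₂) :
    ∃ l, M.IsPathFrom a c l ∧ ∀ x ∈ l, x ∈ l₁ ∨ x ∈ l₂ := by
  obtain ⟨hc1, hh1, hg1⟩ := h₁
  obtain ⟨hc2, hh2, hg2⟩ := h₂
  have hl1ne : l₁ ≠ [] := by rintro rfl; simp at hh1
  cases l₂ with
  | nil => simp at hh2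
  | cons b' t =>
    simp only [List.head?_cons, Option.some_inj] at hh2
    have hh2s := hh2.symm
    subst hh2s
    refine ⟨l₁ ++ t, ⟨?_, ?_, ?_⟩, ?_⟩
    · refine List.isChain_append.2 ⟨hc1, hc2.tail, ?_⟩
      intro x hx y hy
      have hx' : x = b := by rw [Option.mem_def, hg1] at hx; exact (Option.some_inj.1 hx).symm
      subst hx'
      exact (List.isChain_cons.1 hc2).1 y hy
    · rw [List.head?_append_of_ne_nil _ hl1ne]; exact hh1
    · cases t with
      | nil =>
        simp only [List.getLast?_singleton, Option.some_inj] at hg2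
        subst hg2
        simpa using hg1
      | cons e t' =>
        rw [List.getLast?_append_of_ne_nil _ (by simp)]
        rw [List.getLast?_cons_cons] at hg2
        exact hg2
    · intro x hx
      rcases List.mem_append.1 hx with hx | hx
      · exact Or.inl hx
      · exact Or.inr (List.mem_cons_of_mem _ hx)

variable {N : Net V} {X : Set V}

/-- Antisymmetry of reach in an acyclic network. -/
lemma NetAux.reach_antisymm (hN : N.IsPhylo X) {a b : V} (h1 : N.reach a b) :
    N.reach b a → a = b := by
  induction h1 with
  | refl => intro _; rfl
  | @tail m c ham harc ih =>
    intro h2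
    exact absurd (h2.trans ham) (hN.acyclic harc)

/-- A minimal element of a finite nonempty set w.r.t. a transitive antisymmetric relation. -/
lemma NetAux.exists_min_rel (r : V → V → Prop) (htr : ∀ {a b c}, r a b → r b c → r a c)
    (hanti : ∀ {a b}, r a b → r b a → a = b) :
    ∀ (n : ℕ) (S : Set V), S.Finite → S.ncard ≤ n → S.Nonempty →
      ∃ m ∈ S, ∀ z ∈ S, r z m → z = m := by
  intro n
  induction n with
  | zero =>
    intro S hfin hcard hne
    rw [Nat.le_zero, Set.ncard_eq_zero hfin] at hcard
    exact absurd hcard (Set.nonempty_iff_ne_empty.1 hne)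
  | succ n ih =>
    intro S hfin hcard hne
    obtain ⟨m₀, hm₀⟩ := hne
    by_cases hT : ∃ z ∈ S, r z m₀ ∧ z ≠ m₀
    · obtain ⟨z₀, hz₀S, hz₀r, hz₀ne⟩ := hT
      set T : Set V := {z ∈ S | r z m₀ ∧ z ≠ m₀} with hTdef
      have hTsub : T ⊆ S := fun z hz => hz.1
      have hm₀T : m₀ ∉ T := fun h => h.2.2 rfl
      have hTfin : T.Finite := hfin.subset hTsub
      have hTss : T ⊂ S := ⟨hTsub, fun h => hm₀T (h hm₀)⟩
      have hTcard : T.ncard < S.ncard := Set.ncard_lt_ncard hTss hfin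
      have hTcard' : T.ncard ≤ n := by omega
      obtain ⟨m, hmT, hmin⟩ := ih T hTfin hTcard' ⟨z₀, hz₀S, hz₀r, hz₀ne⟩
      refine ⟨m, hTsub hmT, ?_⟩
      intro z hzS hzm
      have hzm₀ : r z m₀ := htr hzm hmT.2.1
      by_cases hz : z = m₀
      · exact absurd (hanti hmT.2.1 (hz ▸ hzm)) hmT.2.2
      · exact hmin z ⟨hzS, hzm₀, hz⟩ hzm
    · push_neg at hT
      refine ⟨m₀, hm₀, ?_⟩
      intro z hz hr
      by_contra hne'
      exact hne' (hT z hz hr)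

/-- Every vertex is reachable from the root. -/
lemma NetAux.root_reach (hN : N.IsPhylo X) : ∀ a ∈ N.verts, N.reach N.root a := by
  have key : ∀ (n : ℕ), ∀ a ∈ N.verts, ({c ∈ N.verts | N.reach c a}).ncard ≤ n →
      N.reach N.root a := by
    intro n
    induction n with
    | zero =>
      intro a ha hcard
      exfalso
      have hfin : ({c ∈ N.verts | N.reach c a}).Finite := hN.finite.subset (fun c hc => hc.1)
      rw [Nat.le_zero, Set.ncard_eq_zero hfin] at hcard
      have : a ∈ ({c ∈ N.verts | N.reach c a}) := ⟨ha, Relation.ReflTransGen.refl⟩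
      rw [hcard] at this
      exact this
    | succ n ih =>
      intro a ha hcard
      by_cases hdeg : N.inDeg a = 0
      · rw [hN.root_unique a ha hdeg]
        exact Relation.ReflTransGen.refl
      · have hne : {u | N.arc u a}.Nonempty := by
          by_contra h
          rw [Set.not_nonempty_iff_eq_empty] at h
          exact hdeg (by simp [Net.inDeg, h])
        obtain ⟨b, hb⟩ := hne
        have hbv : b ∈ N.verts := (hN.arc_mem hb).1
        have hsub : {c ∈ N.verts | N.reach c b} ⊆ {c ∈ N.verts | N.reach c a} :=
          fun c hc => ⟨hc.1, hc.2.tail hb⟩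
        have hamem : a ∈ {c ∈ N.verts | N.reach c a} := ⟨ha, Relation.ReflTransGen.refl⟩
        have hanot : a ∉ {c ∈ N.verts | N.reach c b} := fun h => hN.acyclic hb h.2
        have hss : {c ∈ N.verts | N.reach c b} ⊂ {c ∈ N.verts | N.reach c a} :=
          ⟨hsub, fun h => hanot (h hamem)⟩
        have hlt := Set.ncard_lt_ncard hss (hN.finite.subset (fun c hc => hc.1))
        have := ih b hbv (by omega)
        exact this.tail hb
  intro a ha
  exact key _ a ha le_rfl

/-- Leaves are visible and not cov-subdividing. -/
lemma NetAux.leaf_visible (hN : N.IsPhylo X) {y : V} (hy : y ∈ N.leaves) : N.Visible y := by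
  refine ⟨hy.1, y, hy, ?_⟩
  intro l hl
  exact List.mem_of_mem_getLast? hl.2.2

lemma NetAux.leaf_out_empty (hN : N.IsPhylo X) {y : V} (hy : y ∈ N.leaves) :
    {c | N.arc y c} = ∅ := by
  have hsub : {c | N.arc y c} ⊆ N.verts := fun c hc => (hN.arc_mem hc).2
  have hfin := hN.finite.subset hsub
  have := hy.2
  rw [Net.outDeg, Set.ncard_eq_zero hfin] at this
  exact this

lemma NetAux.leaf_reach (hN : N.IsPhylo X) {y c : V} (hy : y ∈ N.leaves) (h : N.reach y c) :
    y = c := by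
  rcases h.cases_head with h | ⟨d, hd, _⟩
  · exact h
  · exact absurd hd (by have := NetAux.leaf_out_empty hN hy; intro h'
                        exact absurd h' (by rw [Set.eq_empty_iff_forall_notMem] at this
                                            exact this d))

lemma NetAux.leaf_not_sub (hN : N.IsPhylo X) {y : V} (hy : y ∈ N.leaves) :
    ¬ N.cov.Subdividing y := by
  intro hsub
  have hout : {c | N.cov.arc y c} = ∅ := by
    rw [Set.eq_empty_iff_forall_notMem]
    intro c hc
    obtain ⟨_, _, hne, hr, _⟩ := hc
    exact hne (NetAux.leaf_reach hN hy hr)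
  have := hsub.2
  rw [Net.outDeg, hout] at this
  simp at this

/-- cov-reach implies reach. -/
lemma NetAux.cov_reach {a b : V} (h : N.cov.reach a b) : N.reach a b := by
  induction h with
  | refl => exact Relation.ReflTransGen.refl
  | tail _ harc ih => exact ih.trans harc.2.2.2.1

/-- Density: a cov-arc towards any visible descendant. -/
lemma NetAux.density_down (hN : N.IsPhylo X) {a c : V} (hav : N.Visible a) (hcv : N.Visible c)
    (hr : N.reach a c) (hne : a ≠ c) : ∃ m, N.cov.arc a m ∧ N.reach m c := by
  set S : Set V := {m | N.Visible m ∧ m ≠ a ∧ N.reach a m ∧ N.reach m c} with hS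
  have hSsub : S ⊆ N.verts := fun m hm => hm.1.1
  have hSfin : S.Finite := hN.finite.subset hSsub
  have hSne : S.Nonempty := ⟨c, hcv, fun h => hne h.symm, hr, Relation.ReflTransGen.refl⟩
  obtain ⟨m, hmS, hmin⟩ := NetAux.exists_min_rel N.reach
    (fun h1 h2 => h1.trans h2) (fun h1 h2 => NetAux.reach_antisymm hN h1 h2)
    S.ncard S hSfin le_rfl hSne
  refine ⟨m, ⟨hav, hmS.1, fun h => hmS.2.1 h.symm, hmS.2.2.1, ?_⟩, hmS.2.2.2⟩
  rintro ⟨z, hzv, hza, hzm, haz, hzm'⟩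
  have hzS : z ∈ S := ⟨hzv, hza, haz, hzm'.trans hmS.2.2.2⟩
  exact hzm (hmin z hzS hzm')

/-- Dual density: a cov-arc from some visible ancestor. -/
lemma NetAux.density_up (hN : N.IsPhylo X) {a c : V} (hav : N.Visible a) (hcv : N.Visible c)
    (hr : N.reach c a) (hne : a ≠ c) : ∃ m, N.cov.arc m a ∧ N.reach c m := by
  set S : Set V := {m | N.Visible m ∧ m ≠ a ∧ N.reach m a ∧ N.reach c m} with hS
  have hSsub : S ⊆ N.verts := fun m hm => hm.1.1
  have hSfin : S.Finite := hN.finite.subset hSsub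
  have hSne : S.Nonempty := ⟨c, hcv, fun h => hne h.symm, hr, Relation.ReflTransGen.refl⟩
  obtain ⟨m, hmS, hmin⟩ := NetAux.exists_min_rel (fun x y => N.reach y x)
    (fun h1 h2 => h2.trans h1) (fun h1 h2 => NetAux.reach_antisymm hN h2 h1)
    S.ncard S hSfin le_rfl hSne
  refine ⟨m, ⟨hmS.1, hav, hmS.2.1, hmS.2.2.1, ?_⟩, hmS.2.2.2⟩
  rintro ⟨z, hzv, hzm, hza, hmz, hza'⟩
  have hzS : z ∈ S := ⟨hzv, hza, hza', hmS.2.2.2.trans hmz⟩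
  exact hzm (hmin z hzS hmz)

/-- Push down past a cov-subdividing vertex. -/
lemma NetAux.push_down (hN : N.IsPhylo X) {x x' c : V} (hsub : N.cov.Subdividing x)
    (harc : N.cov.arc x x') (hcv : N.Visible c) (hr : N.reach x c) (hne : c ≠ x) :
    N.reach x' c := by
  obtain ⟨m, hm, hmr⟩ := NetAux.density_down hN harc.1 hcv hr (fun h => hne h.symm)
  have hcard := hsub.2
  rw [Net.outDeg, Set.ncard_eq_one] at hcard
  obtain ⟨a, ha⟩ := hcard
  have h1 : m = a := by have : m ∈ {w | N.cov.arc x w} := hm; rwa [ha] at this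
  have h2 : x' = a := by have : x' ∈ {w | N.cov.arc x w} := harc; rwa [ha] at this
  rw [h2, ← h1]; exact hmr

/-- Push up past a cov-subdividing vertex. -/
lemma NetAux.push_up (hN : N.IsPhylo X) {x x' c : V} (hsub : N.cov.Subdividing x)
    (harc : N.cov.arc x' x) (hcv : N.Visible c) (hr : N.reach c x) (hne : c ≠ x) :
    N.reach c x' := by
  obtain ⟨m, hm, hmr⟩ := NetAux.density_up hN harc.2.1 hcv hr (fun h => hne h.symm)
  have hcard := hsub.1
  rw [Net.inDeg, Set.ncard_eq_one] at hcard
  obtain ⟨a, ha⟩ := hcard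
  have h1 : m = a := by have : m ∈ {w | N.cov.arc w x} := hm; rwa [ha] at this
  have h2 : x' = a := by have : x' ∈ {w | N.cov.arc w x} := harc; rwa [ha] at this
  rw [h2, ← h1]; exact hmr

/-- Descend a cov-chain whose non-last elements are all subdividing. -/
lemma NetAux.descend (hN : N.IsPhylo X) : ∀ (l : List V), l.Chain' N.cov.arc →
    (∀ x ∈ l.dropLast, N.cov.Subdividing x) → ∀ a v, l.head? = some a →
    l.getLast? = some v → ∀ w, N.Visible w → ¬ N.cov.Subdividing w →
    N.reach a w → N.reach v w := by
  intro l
  induction l with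
  | nil => intro _ _ a v ha; simp at ha
  | cons c t ih =>
    intro hc hsub a v ha hv w hwv hwns hr
    simp only [List.head?_cons, Option.some_inj] at ha
    have has := ha.symm
    subst has
    cases t with
    | nil =>
      simp only [List.getLast?_singleton, Option.some_inj] at hv
      subst hv; exact hr
    | cons d t' =>
      have hasub : N.cov.Subdividing a := by
        apply hsub
        rw [List.dropLast_cons₂]
        exact List.mem_cons_self
      have harc : N.cov.arc a d := (List.isChain_cons_cons.1 hc).1
      have hwna : w ≠ a := fun h => hwns (h ▸ hasub)
      have hdr : N.reach d w := NetAux.push_down hN hasub harc hwv hr hwna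
      rw [List.getLast?_cons_cons] at hv
      refine ih (List.isChain_cons_cons.1 hc).2 ?_ d v rfl hv w hwv hwns hdr
      intro x hx
      apply hsub
      rw [List.dropLast_cons₂]
      exact List.mem_cons_of_mem _ hx

/-- Ascend a cov-chain whose non-first elements are all subdividing. -/
lemma NetAux.ascend (hN : N.IsPhylo X) : ∀ (l : List V), l.Chain' N.cov.arc →
    (∀ x ∈ l.tail, N.cov.Subdividing x) → ∀ a v, l.head? = some a →
    l.getLast? = some v → ∀ w, N.Visible w → ¬ N.cov.Subdividing w →
    N.reach w v → N.reach w a := by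
  intro l
  induction l with
  | nil => intro _ _ a v ha; simp at ha
  | cons c t ih =>
    intro hc hsub a v ha hv w hwv hwns hr
    simp only [List.head?_cons, Option.some_inj] at ha
    have has := ha.symm
    subst has
    cases t with
    | nil =>
      simp only [List.getLast?_singleton, Option.some_inj] at hv
      subst hv; exact hr
    | cons d t' =>
      have hdsub : N.cov.Subdividing d := hsub d (List.mem_cons_self)
      have harc : N.cov.arc a d := (List.isChain_cons_cons.1 hc).1
      rw [List.getLast?_cons_cons] at hv
      have hdr : N.reach w d := by
        refine ih (List.isChain_cons_cons.1 hc).2 ?_ d v rfl hv w hwv hwns hr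
        intro x hx
        exact hsub x (List.mem_cons_of_mem _ hx)
      have hwnd : w ≠ d := fun h => hwns (h ▸ hdsub)
      exact NetAux.push_up hN hdsub harc hwv hdr hwnd

/-- A normalise arc gives strict reachability, and endpoint properties. -/
lemma NetAux.narc_strict (hN : N.IsPhylo X) {a b : V} (h : N.normalise.arc a b) :
    N.reach a b ∧ a ≠ b := by
  obtain ⟨_, _, l, ⟨hc, hh, hg⟩, hlen, _⟩ := h
  cases l with
  | nil => simp at hh
  | cons a' t =>
    simp only [List.head?_cons, Option.some_inj] at hh
    subst hh
    cases t with
    | nil => simp at hlen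
    | cons e t' =>
      have harc : N.cov.arc a' e := (List.isChain_cons_cons.1 hc).1
      have haer : N.reach a' e := harc.2.2.2.1
      have hane : a' ≠ e := harc.2.2.1
      have herb : N.reach e b := NetAux.cov_reach
        (NetAux.chain_reach_last N.cov _ hc b hg e
          (List.mem_cons_of_mem _ (List.mem_cons_self)))
      refine ⟨haer.trans herb, ?_⟩
      rintro rfl
      exact hane (NetAux.reach_antisymm hN haer herb)

end AuxShortcut


/-- Chains of normalise-arcs give strict reach (or equality of endpoints). -/
lemma NetAux.nchain_strict {V : Type*} {N : Net V} {X : Set V} (hN : N.IsPhylo X) :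
    ∀ (m : List V), m.Chain' N.normalise.arc → ∀ p q, m.head? = some p →
      m.getLast? = some q → p = q ∨ (N.reach p q ∧ p ≠ q) := by
  intro m
  induction m with
  | nil => intro _ p q hp; simp at hp
  | cons c t ihm =>
    intro hc p q hp hq
    simp only [List.head?_cons, Option.some_inj] at hp
    subst hp
    cases t with
    | nil =>
      simp only [List.getLast?_singleton, Option.some_inj] at hq
      exact Or.inl hq
    | cons d t' =>
      rw [List.getLast?_cons_cons] at hq
      have hs1 := NetAux.narc_strict hN (List.isChain_cons_cons.1 hc).1
      rcases ihm (List.isChain_cons_cons.1 hc).2 d q rfl hq with rfl | hs2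
      · exact Or.inr hs1
      · refine Or.inr ⟨hs1.1.trans hs2.1, ?_⟩
        rintro rfl
        exact hs1.2 (NetAux.reach_antisymm hN hs1.1 hs2.1)

/-- The normalisation `Ñ` of a rooted phylogenetic network `N` has no
shortcuts: it contains no arc `(u,v)` for which it also contains a directed path
from `u` to `v` of length at least 2. -/
theorem stmt1 {V : Type*} (N : Net V) (X : Set V) (hN : N.IsPhylo X) :
    N.normalise.NoShortcuts := by
  intro u v harc hex
  obtain ⟨L, ⟨hLc, hLh, hLg⟩, hLlen⟩ := hex
  obtain ⟨⟨huv, huns⟩, ⟨hvv, hvns⟩, l, ⟨hlc, hlh, hlg⟩, hllen, hlsub⟩ := harc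
  -- decompose L = u :: w :: c0 :: t0
  cases L with
  | nil => simp at hLh
  | cons u' L1 =>
    simp only [List.head?_cons, Option.some_inj] at hLh
    have hLhs := hLh.symm
    subst hLhs
    cases L1 with
    | nil => simp at hLlen
    | cons w L2 =>
      cases L2 with
      | nil => simp at hLlen
      | cons c0 t0 =>
        -- facts about w
        have harc_uw : N.normalise.arc u w := (List.isChain_cons_cons.1 hLc).1
        have hwv : N.Visible w := harc_uw.2.1.1
        have hwns : ¬ N.cov.Subdividing w := harc_uw.2.1.2
        have hsuw : N.reach u w ∧ u ≠ w := NetAux.narc_strict hN harc_uw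
        have harc_wc : N.normalise.arc w c0 := (List.isChain_cons_cons.1 (List.isChain_cons_cons.1 hLc).2).1
        have hswc : N.reach w c0 ∧ w ≠ c0 := NetAux.narc_strict hN harc_wc
        have hgc0 : (c0 :: t0).getLast? = some v := by
          rw [List.getLast?_cons_cons, List.getLast?_cons_cons] at hLg; exact hLg
        have hswv : N.reach w v ∧ w ≠ v := by
          rcases NetAux.nchain_strict hN (c0 :: t0)
              (List.isChain_cons_cons.1 (List.isChain_cons_cons.1 hLc).2).2 c0 v rfl hgc0 with rfl | hs2
          · exact hswc
          · refine ⟨hswc.1.trans hs2.1, ?_⟩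
            rintro rfl
            exact hswc.2 (NetAux.reach_antisymm hN hswc.1 hs2.1)
        -- decompose l = u :: x₁ :: r
        cases l with
        | nil => simp at hlh
        | cons u'' l1 =>
          simp only [List.head?_cons, Option.some_inj] at hlh
          have hlhs := hlh.symm
          subst hlhs
          cases l1 with
          | nil => simp at hllen
          | cons x₁ r =>
            have harc_ux₁ : N.cov.arc u x₁ := (List.isChain_cons_cons.1 hlc).1
            cases r with
            | nil =>
              -- cov arc (u, v) directly; w is strictly between: contradiction
              simp only [List.getLast?_cons_cons, List.getLast?_singleton,
                Option.some_inj] at hlg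
              subst hlg
              exact harc_ux₁.2.2.2.2 ⟨w, hwv, fun h => hsuw.2 h.symm, hswv.2, hsuw.1, hswv.1⟩
            | cons c1 r' =>
              -- x₁ is an interior vertex of the cov path, hence subdividing
              have hx₁sub : N.cov.Subdividing x₁ := by
                apply hlsub
                show x₁ ∈ (x₁ :: c1 :: r').dropLast
                rw [List.dropLast_cons₂]
                exact List.mem_cons_self
              have hx₁v : N.Visible x₁ := harc_ux₁.2.1
              have hux₁ : u ≠ x₁ := harc_ux₁.2.2.1
              have hrux₁ : N.reach u x₁ := harc_ux₁.2.2.2.1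
              -- the tail of the cov path, from x₁ to v
              have htailc : (x₁ :: c1 :: r').Chain' N.cov.arc := (List.isChain_cons_cons.1 hlc).2
              have htailg : (x₁ :: c1 :: r').getLast? = some v := by
                rw [List.getLast?_cons_cons] at hlg; exact hlg
              have hrx₁v : N.reach x₁ v := NetAux.cov_reach
                (NetAux.chain_reach_last N.cov _ htailc v htailg x₁ (List.mem_cons_self))
              have hx₁nv : x₁ ≠ v := fun h => hvns (h ▸ hx₁sub)
              -- witness leaf of x₁
              obtain ⟨hx₁verts, y₁, hy₁leaf, hy₁wit⟩ := hx₁v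
              have hy₁v : N.Visible y₁ := NetAux.leaf_visible hN hy₁leaf
              have hy₁ns : ¬ N.cov.Subdividing y₁ := NetAux.leaf_not_sub hN hy₁leaf
              -- reach x₁ y₁ via some root path
              obtain ⟨P₀, hP₀⟩ := NetAux.reach_path N (NetAux.root_reach hN y₁ hy₁leaf.1)
              have hx₁P₀ : x₁ ∈ P₀ := hy₁wit P₀ hP₀
              have hrx₁y₁ : N.reach x₁ y₁ :=
                NetAux.chain_reach_last N P₀ hP₀.1 y₁ hP₀.2.2 x₁ hx₁P₀
              -- reach v y₁ by descending the cov path tail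
              have hrvy₁ : N.reach v y₁ := by
                refine NetAux.descend hN (x₁ :: c1 :: r') htailc ?_ x₁ v rfl htailg y₁ hy₁v
                  hy₁ns hrx₁y₁
                intro x hx
                exact hlsub x hx
              -- build the big path root → u → w → v → y₁
              obtain ⟨P₁, hP₁⟩ := NetAux.reach_path N (NetAux.root_reach hN u huv.1)
              obtain ⟨P₂, hP₂⟩ := NetAux.reach_path N hsuw.1
              obtain ⟨P₃, hP₃⟩ := NetAux.reach_path N hswv.1
              obtain ⟨P₄, hP₄⟩ := NetAux.reach_path N hrvy₁
              obtain ⟨Q₁, hQ₁, hQ₁mem⟩ := NetAux.path_trans N hP₁ hP₂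
              obtain ⟨Q₂, hQ₂, hQ₂mem⟩ := NetAux.path_trans N hQ₁ hP₃
              obtain ⟨Q₃, hQ₃, hQ₃mem⟩ := NetAux.path_trans N hQ₂ hP₄
              have hx₁Q : x₁ ∈ Q₃ := hy₁wit Q₃ hQ₃
              rcases hQ₃mem x₁ hx₁Q with hx | hx
              · rcases hQ₂mem x₁ hx with hx | hx
                · rcases hQ₁mem x₁ hx with hx | hx
                  · -- x₁ on root→u : reach x₁ u, contradiction with reach u x₁
                    have : N.reach x₁ u := NetAux.chain_reach_last N P₁ hP₁.1 u hP₁.2.2 x₁ hx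
                    exact hux₁ (NetAux.reach_antisymm hN hrux₁ this)
                  · -- x₁ on u→w : reach x₁ w, descend gives reach v w, contra w ≠ v
                    have hx₁w : N.reach x₁ w :=
                      NetAux.chain_reach_last N P₂ hP₂.1 w hP₂.2.2 x₁ hx
                    have : N.reach v w := NetAux.descend hN (x₁ :: c1 :: r') htailc
                      (fun x hx' => hlsub x hx') x₁ v rfl htailg w hwv hwns hx₁w
                    exact hswv.2 (NetAux.reach_antisymm hN hswv.1 this)
                · -- x₁ on w→v : reach w x₁, ascend [u,x₁] gives reach w u, contra u ≠ w
                  have hwx₁ : N.reach w x₁ :=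
                    NetAux.chain_reach_head N P₃ hP₃.1 w hP₃.2.1 x₁ hx
                  have : N.reach w u := by
                    refine NetAux.ascend hN [u, x₁] (List.isChain_pair.2 harc_ux₁) ?_ u x₁ rfl
                      rfl w hwv hwns hwx₁
                    intro x hx'
                    simp only [List.tail_cons, List.mem_singleton] at hx'
                    subst hx'; exact hx₁sub
                  exact hsuw.2 (NetAux.reach_antisymm hN hsuw.1 this)
              · -- x₁ on v→y₁ : reach v x₁, contra with reach x₁ v
                have : N.reach v x₁ := NetAux.chain_reach_head N P₄ hP₄.1 v hP₄.2.1 x₁ hx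
                exact hx₁nv (NetAux.reach_antisymm hN hrx₁v this)
end

section
/- Let N be a rooted phylogenetic network on a finite set X. Then the normalisation Ñ of N is itself a rooted phylogenetic network on X: it is a finite acyclic directed graph whose unique in-degree-0 vertex is the root ρ of N, whose out-degree-0 vertices are exactly the elements of X and each has in-degree 1, and each of whose other non-root vertices has either in-degree 1 and out-degree at least 2, or out-degree 1 and in-degree at least 2. -/
/-! ### Auxiliary development for stmt2 -/

namespace Net

variable {V : Type*} {M N : Net V} {X : Set V} {u v w x y z : V} {l m : List V}

/-- The opposite network (arcs reversed). -/
def op (M : Net V) : Net V := ⟨M.verts, M.root, flip M.arc⟩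

theorem op_arc : M.op.arc u v ↔ M.arc v u := Iff.rfl

theorem IsPathFrom.ne_nil (h : M.IsPathFrom u v l) : l ≠ [] := by
  rintro rfl; simp [IsPathFrom] at h

theorem isPathFrom_singleton : M.IsPathFrom u v [x] ↔ u = x ∧ v = x := by
  simp [IsPathFrom, eq_comm, List.Chain', List.isChain_singleton]

theorem isPathFrom_cons_cons {a b : V} {t : List V} :
    M.IsPathFrom u v (a :: b :: t) ↔ u = a ∧ M.arc a b ∧ M.IsPathFrom b v (b :: t) := by
  constructor
  · rintro ⟨h1, h2, h3⟩
    simp only [List.Chain'] at h1; rw [List.isChain_cons_cons] at h1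
    simp only [List.head?_cons, Option.some.injEq] at h2
    exact ⟨h2.symm, h1.1, h1.2, rfl, by simpa [List.getLast?_cons_cons] using h3⟩
  · rintro ⟨rfl, h2, h3⟩
    exact ⟨List.isChain_cons_cons.mpr ⟨h2, h3.1⟩, rfl, by simpa [List.getLast?_cons_cons] using h3.2.2⟩

theorem IsPathFrom.reach (h : M.IsPathFrom u v l) : M.reach u v := by
  induction l generalizing u with
  | nil => exact absurd rfl h.ne_nil
  | cons a t ih =>
    cases t with
    | nil => obtain ⟨rfl, rfl⟩ := isPathFrom_singleton.mp h; exact .refl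
    | cons b t' =>
      obtain ⟨rfl, hab, h'⟩ := isPathFrom_cons_cons.mp h
      exact .head hab (ih h')

theorem IsPathFrom.reach_of_mem (h : M.IsPathFrom u v l) (hx : x ∈ l) :
    M.reach u x ∧ M.reach x v := by
  induction l generalizing u with
  | nil => cases hx
  | cons a t ih =>
    cases t with
    | nil =>
      obtain ⟨rfl, rfl⟩ := isPathFrom_singleton.mp h
      simp only [List.mem_singleton] at hx; subst hx
      exact ⟨.refl, .refl⟩
    | cons b t' =>
      obtain ⟨rfl, hab, h'⟩ := isPathFrom_cons_cons.mp h
      rcases List.mem_cons.mp hx with rfl | hx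
      · exact ⟨.refl, h.reach⟩
      · obtain ⟨h1, h2⟩ := ih h' hx
        exact ⟨.head hab h1, h2⟩

theorem IsPathFrom.mem_left (h : M.IsPathFrom u v l) : u ∈ l := by
  cases l with
  | nil => exact absurd rfl h.ne_nil
  | cons a t =>
    have : u = a := by simpa using h.2.1.symm
    simp [this]

theorem IsPathFrom.mem_right (h : M.IsPathFrom u v l) : v ∈ l := by
  have h1 : l ≠ [] := h.ne_nil
  have : l.getLast h1 = v := by
    have := h.2.2
    rwa [List.getLast?_eq_getLast h1, Option.some.injEq] at this
  rw [← this]; exact List.getLast_mem h1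

theorem reach_isPathFrom (h : M.reach u v) : ∃ l, M.IsPathFrom u v l := by
  induction h using Relation.ReflTransGen.head_induction_on with
  | refl => exact ⟨[v], isPathFrom_singleton.mpr ⟨rfl, rfl⟩⟩
  | head hab _ ih =>
    obtain ⟨l, hl⟩ := ih
    rename_i a b _
    cases l with
    | nil => exact absurd rfl hl.ne_nil
    | cons c t =>
      obtain rfl : c = b := by simpa using hl.2.1
      exact ⟨a :: c :: t, isPathFrom_cons_cons.mpr ⟨rfl, hab, hl⟩⟩

theorem IsPathFrom.append (h1 : M.IsPathFrom u v l) (h2 : M.IsPathFrom v w m) :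
    M.IsPathFrom u w (l ++ m.tail) := by
  cases m with
  | nil => exact absurd rfl h2.ne_nil
  | cons b t =>
    obtain rfl : b = v := by simpa using h2.2.1
    cases t with
    | nil =>
      obtain rfl : b = w := by simpa using h2.2.2
      simpa using h1
    | cons c t' =>
      obtain ⟨-, hvc, h2'⟩ := isPathFrom_cons_cons.mp h2
      simp only [List.tail_cons]
      refine ⟨?_, ?_, ?_⟩
      · simp only [List.Chain']; rw [List.isChain_append]
        refine ⟨h1.1, h2'.1, ?_⟩
        intro p hp q hq
        rw [h1.2.2] at hp
        simp only [Option.mem_some_iff] at hp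
        simp only [List.head?_cons, Option.mem_some_iff] at hq
        subst hp; subst hq; exact hvc
      · rw [List.head?_append, h1.2.1]; rfl
      · rw [List.getLast?_append]
        have hg : (c :: t').getLast? = some w := h2'.2.2
        simp [hg]

theorem mem_append_tail (hx : x ∈ l ++ m.tail) : x ∈ l ∨ x ∈ m := by
  rcases List.mem_append.mp hx with h | h
  · exact Or.inl h
  · exact Or.inr (List.mem_of_mem_tail h)

/-- predecessor in a path -/
theorem IsPathFrom.pred (h : M.IsPathFrom u v l) (hx : x ∈ l) (hne : x ≠ u) :
    ∃ p ∈ l, M.arc p x := by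
  induction l generalizing u with
  | nil => cases hx
  | cons a t ih =>
    cases t with
    | nil =>
      obtain ⟨rfl, rfl⟩ := isPathFrom_singleton.mp h
      simp only [List.mem_singleton] at hx; exact absurd hx hne
    | cons b t' =>
      obtain ⟨rfl, hab, h'⟩ := isPathFrom_cons_cons.mp h
      rcases List.mem_cons.mp hx with rfl | hx
      · exact absurd rfl hne
      · by_cases hxb : x = b
        · subst hxb; exact ⟨u, by simp, hab⟩
        · obtain ⟨p, hp, hpx⟩ := ih h' hx hxb
          exact ⟨p, by simp [hp], hpx⟩

/-- successor in a path -/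
theorem IsPathFrom.succ (h : M.IsPathFrom u v l) (hx : x ∈ l) (hne : x ≠ v) :
    ∃ c ∈ l, M.arc x c := by
  induction l generalizing u with
  | nil => cases hx
  | cons a t ih =>
    cases t with
    | nil =>
      obtain ⟨rfl, rfl⟩ := isPathFrom_singleton.mp h
      simp only [List.mem_singleton] at hx; exact absurd hx hne
    | cons b t' =>
      obtain ⟨rfl, hab, h'⟩ := isPathFrom_cons_cons.mp h
      rcases List.mem_cons.mp hx with rfl | hx
      · exact ⟨b, by simp, hab⟩
      · obtain ⟨c, hc, hxc⟩ := ih h' hx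
        exact ⟨c, by simp [hc], hxc⟩

theorem isPathFrom_reverse : M.op.IsPathFrom v u l.reverse ↔ M.IsPathFrom u v l := by
  unfold IsPathFrom
  rw [List.head?_reverse, List.getLast?_reverse]
  constructor
  · rintro ⟨h1, h2, h3⟩
    simp only [List.Chain'] at h1; rw [List.isChain_reverse] at h1
    exact ⟨h1, h3, h2⟩
  · rintro ⟨h1, h2, h3⟩
    simp only [List.Chain']; rw [List.isChain_reverse]
    exact ⟨h1, h3, h2⟩

theorem op_reach : M.op.reach u v ↔ M.reach v u := by
  constructor <;> intro h
  · induction h with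
    | refl => exact .refl
    | tail _ hbc ih => exact .head hbc ih
  · induction h with
    | refl => exact .refl
    | tail _ hbc ih => exact .head hbc ih


theorem eq_of_ncard_eq_one {S : Set V} {b c : V} (h : S.ncard = 1) (hb : b ∈ S) (hc : c ∈ S) :
    b = c := by
  obtain ⟨x, rfl⟩ := Set.ncard_eq_one.mp h
  rw [Set.mem_singleton_iff] at hb hc; rw [hb, hc]

theorem IsPhylo.reach_antisymm (hN : N.IsPhylo X) (h1 : N.reach u v) (h2 : N.reach v u) :
    u = v := by
  rcases h1.cases_head with rfl | ⟨c, hac, hcv⟩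
  · rfl
  · exact absurd (hcv.trans h2) (hN.acyclic hac)

theorem IsPhylo.mem_of_reach (hN : N.IsPhylo X) (h : N.reach u v) (hu : u ∈ N.verts) :
    v ∈ N.verts := by
  induction h with
  | refl => exact hu
  | tail _ hbc _ => exact (hN.arc_mem hbc).2

theorem IsPhylo.parents_finite (hN : N.IsPhylo X) (v : V) : {u | N.arc u v}.Finite :=
  hN.finite.subset fun _ hu => (hN.arc_mem hu).1

theorem IsPhylo.children_finite (hN : N.IsPhylo X) (v : V) : {w | N.arc v w}.Finite :=
  hN.finite.subset fun _ hu => (hN.arc_mem hu).2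

theorem IsPhylo.not_arc_of_outDeg_zero (hN : N.IsPhylo X) {c : V} (h : N.outDeg y = 0)
    (hc : N.arc y c) : False := by
  have := (Set.ncard_pos (hN.children_finite y)).mpr ⟨c, hc⟩
  rw [outDeg] at h; omega

theorem IsPhylo.not_arc_of_inDeg_zero (hN : N.IsPhylo X) {p : V} (h : N.inDeg y = 0)
    (hp : N.arc p y) : False := by
  have := (Set.ncard_pos (hN.parents_finite y)).mpr ⟨p, hp⟩
  rw [inDeg] at h; omega

theorem exists_arc_into (h : M.reach u v) (hne : u ≠ v) : ∃ p, M.arc p v := by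
  obtain ⟨l, hl⟩ := reach_isPathFrom h
  obtain ⟨p, -, hp⟩ := hl.pred hl.mem_right (Ne.symm hne)
  exact ⟨p, hp⟩

theorem exists_arc_outof (h : M.reach u v) (hne : u ≠ v) : ∃ c, M.arc u c := by
  obtain ⟨l, hl⟩ := reach_isPathFrom h
  obtain ⟨c, -, hc⟩ := hl.succ hl.mem_left hne
  exact ⟨c, hc⟩

theorem IsPhylo.ancCard_lt (hN : N.IsPhylo X) (h : N.reach u v) (hne : u ≠ v)
    (hv : v ∈ N.verts) :
    {x ∈ N.verts | N.reach x u}.ncard < {x ∈ N.verts | N.reach x v}.ncard := by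
  have hfin : {x ∈ N.verts | N.reach x v}.Finite := hN.finite.subset fun x hx => hx.1
  apply Set.ncard_lt_ncard _ hfin
  have hsub : {x ∈ N.verts | N.reach x u} ⊆ {x ∈ N.verts | N.reach x v} := by
    intro x hx
    exact ⟨hx.1, hx.2.trans h⟩
  rw [Set.ssubset_iff_of_subset hsub]
  refine ⟨v, ?_, ?_⟩
  · exact ⟨hv, Relation.ReflTransGen.refl⟩
  · intro h'
    exact hne (hN.reach_antisymm h h'.2)

theorem IsPhylo.descCard_lt (hN : N.IsPhylo X) (h : N.reach u v) (hne : u ≠ v)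
    (hu : u ∈ N.verts) :
    {x ∈ N.verts | N.reach v x}.ncard < {x ∈ N.verts | N.reach u x}.ncard := by
  have hfin : {x ∈ N.verts | N.reach u x}.Finite := hN.finite.subset fun x hx => hx.1
  apply Set.ncard_lt_ncard _ hfin
  have hsub : {x ∈ N.verts | N.reach v x} ⊆ {x ∈ N.verts | N.reach u x} := by
    intro x hx
    exact ⟨hx.1, h.trans hx.2⟩
  rw [Set.ssubset_iff_of_subset hsub]
  refine ⟨u, ?_, ?_⟩
  · exact ⟨hu, Relation.ReflTransGen.refl⟩
  · intro h'
    exact hne (hN.reach_antisymm h h'.2)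

theorem IsPhylo.root_reach (hN : N.IsPhylo X) {v : V} (hv : v ∈ N.verts) :
    N.reach N.root v := by
  generalize hn : {x ∈ N.verts | N.reach x v}.ncard = n
  induction n using Nat.strong_induction_on generalizing v with
  | _ n ih =>
    by_cases hvr : v = N.root
    · subst hvr; exact .refl
    · have h0 : N.inDeg v ≠ 0 := fun h0 => hvr (hN.root_unique v hv h0)
      obtain ⟨p, hp⟩ : ∃ p, N.arc p v := by
        by_contra h'
        push_neg at h'
        have he : {u | N.arc u v} = ∅ := Set.eq_empty_iff_forall_notMem.mpr h'
        exact h0 (by simp [Net.inDeg, he])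
      have hpv : p ∈ N.verts := (hN.arc_mem hp).1
      have hpne : p ≠ v := by
        intro he; subst he; exact hN.acyclic hp .refl
      have hlt := hN.ancCard_lt (Relation.ReflTransGen.single hp) hpne hv
      exact (ih _ (hn ▸ hlt) hpv rfl).tail hp

theorem IsPhylo.exists_min_reach (hN : N.IsPhylo X) {S : Set V} (hsub : S ⊆ N.verts)
    (hne : S.Nonempty) : ∃ u ∈ S, ∀ w ∈ S, N.reach w u → w = u := by
  obtain ⟨u, huS, hmin⟩ := Set.exists_min_image S
    (fun w => {x ∈ N.verts | N.reach x w}.ncard) (hN.finite.subset hsub) hne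
  refine ⟨u, huS, fun w hwS hwu => ?_⟩
  by_contra hnew
  have hlt := hN.ancCard_lt hwu hnew (hsub huS)
  have := hmin w hwS
  omega

theorem IsPhylo.exists_max_reach (hN : N.IsPhylo X) {S : Set V} (hsub : S ⊆ N.verts)
    (hne : S.Nonempty) : ∃ u ∈ S, ∀ w ∈ S, N.reach u w → w = u := by
  obtain ⟨u, huS, hmax⟩ := Set.exists_max_image S
    (fun w => {x ∈ N.verts | N.reach x w}.ncard) (hN.finite.subset hsub) hne
  refine ⟨u, huS, fun w hwS huw => ?_⟩
  by_contra hnew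
  have hlt := hN.ancCard_lt huw (fun h => hnew h.symm) (hsub hwS)
  have := hmax w hwS
  omega

/-! ### Visibility and the cover digraph -/

theorem Visible.mem (h : N.Visible v) : v ∈ N.verts := h.1

theorem leaf_visible (hy : y ∈ N.leaves) : N.Visible y :=
  ⟨hy.1, y, hy, fun _ hl => hl.mem_right⟩

theorem IsPhylo.root_visible (hN : N.IsPhylo X) : N.Visible N.root := by
  obtain ⟨x, hx⟩ := hN.nonempty
  exact ⟨hN.root_mem, x, hN.leaves_eq ▸ hx, fun _ hl => hl.mem_left⟩

theorem cov_arc_reach (h : N.cov.arc u v) : N.reach u v := h.2.2.2.1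
theorem cov_arc_ne (h : N.cov.arc u v) : u ≠ v := h.2.2.1
theorem cov_arc_vis_left (h : N.cov.arc u v) : N.Visible u := h.1
theorem cov_arc_vis_right (h : N.cov.arc u v) : N.Visible v := h.2.1

theorem cov_reach_reach (h : N.cov.reach u v) : N.reach u v := by
  induction h with
  | refl => exact .refl
  | tail _ hbc ih => exact ih.trans hbc.2.2.2.1

theorem IsPhylo.cov_parents_finite (hN : N.IsPhylo X) (v : V) : {w | N.cov.arc w v}.Finite :=
  hN.finite.subset fun _ hw => hw.1.1

theorem IsPhylo.cov_children_finite (hN : N.IsPhylo X) (v : V) : {w | N.cov.arc v w}.Finite :=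
  hN.finite.subset fun _ hw => hw.2.1.1

theorem IsPhylo.witness_reach (hN : N.IsPhylo X) (hv : N.Visible v) :
    ∃ y ∈ N.leaves, N.reach v y ∧ ∀ l, N.IsPathFrom N.root y l → v ∈ l := by
  obtain ⟨hvm, y, hy, hwit⟩ := hv
  obtain ⟨l, hl⟩ := reach_isPathFrom (hN.root_reach hy.1)
  exact ⟨y, hy, (hl.reach_of_mem (hwit l hl)).2, hwit⟩

theorem IsPhylo.leaf_cov_outDeg (hN : N.IsPhylo X) (hy : y ∈ N.leaves) :
    N.cov.outDeg y = 0 := by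
  have he : {w | N.cov.arc y w} = ∅ := by
    ext w
    simp only [Set.mem_setOf_eq, Set.mem_empty_iff_false, iff_false]
    intro hw
    obtain ⟨c, hc⟩ := exists_arc_outof (cov_arc_reach hw) (cov_arc_ne hw)
    exact hN.not_arc_of_outDeg_zero hy.2 hc
  simp [Net.outDeg, he]

theorem IsPhylo.root_cov_inDeg (hN : N.IsPhylo X) : N.cov.inDeg N.root = 0 := by
  have he : {w | N.cov.arc w N.root} = ∅ := by
    ext w
    simp only [Set.mem_setOf_eq, Set.mem_empty_iff_false, iff_false]
    intro hw
    obtain ⟨p, hp⟩ := exists_arc_into (cov_arc_reach hw) (cov_arc_ne hw)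
    exact hN.not_arc_of_inDeg_zero hN.root_inDeg hp
  simp [Net.inDeg, he]

theorem IsPhylo.root_not_sub (hN : N.IsPhylo X) : ¬ N.cov.Subdividing N.root := by
  intro h
  have := h.1
  rw [hN.root_cov_inDeg] at this
  omega

theorem IsPhylo.leaf_not_sub (hN : N.IsPhylo X) (hy : y ∈ N.leaves) :
    ¬ N.cov.Subdividing y := by
  intro h
  have := h.2
  rw [hN.leaf_cov_outDeg hy] at this
  omega

theorem IsPhylo.exists_cov_parent (hN : N.IsPhylo X) (hv : N.Visible v) (hne : v ≠ N.root) :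
    ∃ w, N.cov.arc w v := by
  have hsub : {w | N.Visible w ∧ N.reach w v ∧ w ≠ v} ⊆ N.verts := fun w hw => hw.1.1
  have hSne : {w | N.Visible w ∧ N.reach w v ∧ w ≠ v}.Nonempty :=
    ⟨N.root, hN.root_visible, hN.root_reach hv.1, fun h => hne h.symm⟩
  obtain ⟨u, huS, hmax⟩ := hN.exists_max_reach hsub hSne
  refine ⟨u, huS.1, hv, huS.2.2, huS.2.1, ?_⟩
  rintro ⟨w, hwvis, hwneu, hwnev, huw, hwv⟩
  exact hwneu (hmax w ⟨hwvis, hwv, hwnev⟩ huw)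

theorem IsPhylo.exists_cov_child (hN : N.IsPhylo X) (hv : N.Visible v) (hnl : v ∉ N.leaves) :
    ∃ w, N.cov.arc v w := by
  obtain ⟨y, hy, hvy, -⟩ := hN.witness_reach hv
  have hsub : {w | N.Visible w ∧ N.reach v w ∧ w ≠ v} ⊆ N.verts := fun w hw => hw.1.1
  have hSne : {w | N.Visible w ∧ N.reach v w ∧ w ≠ v}.Nonempty :=
    ⟨y, leaf_visible hy, hvy, fun h => hnl (h ▸ hy)⟩
  obtain ⟨u, huS, hmin⟩ := hN.exists_min_reach hsub hSne
  refine ⟨u, hv, huS.1, fun h => huS.2.2 h.symm, huS.2.1, ?_⟩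
  rintro ⟨w, hwvis, hwnev, hwneu, hvw, hwu⟩
  exact hwneu (hmin w ⟨hwvis, hvw, hwnev⟩ hwu)

theorem IsPhylo.visible_parent (hN : N.IsPhylo X) (hv : N.Visible v) (h1 : N.inDeg v = 1) :
    ∃ p, N.arc p v ∧ N.Visible p ∧ ∀ w, N.cov.arc w v → w = p := by
  obtain ⟨p, hp⟩ := Set.ncard_eq_one.mp h1
  have hpv : N.arc p v := by
    have : p ∈ {u | N.arc u v} := hp ▸ Set.mem_singleton p
    exact this
  have hvr : v ≠ N.root := by
    intro h; rw [h, hN.root_inDeg] at h1; omega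
  obtain ⟨hvm, y, hy, hwit⟩ := hv
  have hpvis : N.Visible p := by
    refine ⟨(hN.arc_mem hpv).1, y, hy, fun l hl => ?_⟩
    have hvl := hwit l hl
    have hvroot : v ≠ N.root := hvr
    obtain ⟨q, hql, hq⟩ := hl.pred hvl hvr
    have hqp : q = p := by
      have : q ∈ {u | N.arc u v} := hq
      rw [hp] at this; exact this
    exact hqp ▸ hql
  refine ⟨p, hpv, hpvis, fun w hw => ?_⟩
  by_contra hwp
  have hwv : N.reach w v := cov_arc_reach hw
  have hwnev : w ≠ v := cov_arc_ne hw
  obtain ⟨l, hl⟩ := reach_isPathFrom hwv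
  obtain ⟨q, hql, hq⟩ := hl.pred hl.mem_right (Ne.symm hwnev)
  have hqp : q = p := by
    have : q ∈ {u | N.arc u v} := hq
    rw [hp] at this; exact this
  have hwpr : N.reach w p := (hl.reach_of_mem (hqp ▸ hql)).1
  have hpnev : p ≠ v := by
    intro h; subst h; exact hN.acyclic hpv .refl
  exact hw.2.2.2.2 ⟨p, hpvis, Ne.symm hwp, hpnev, hwpr, .single hpv⟩

theorem IsPhylo.visible_child (hN : N.IsPhylo X) (hv : N.Visible v) (hnl : v ∉ N.leaves)
    (h1 : N.outDeg v = 1) :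
    ∃ c, N.arc v c ∧ N.Visible c ∧ ∀ w, N.cov.arc v w → w = c := by
  obtain ⟨c, hc⟩ := Set.ncard_eq_one.mp h1
  have hvc : N.arc v c := by
    have : c ∈ {w | N.arc v w} := hc ▸ Set.mem_singleton c
    exact this
  obtain ⟨hvm, y, hy, hwit⟩ := hv
  have hvney : v ≠ y := fun h => hnl (h ▸ hy)
  have hcvis : N.Visible c := by
    refine ⟨(hN.arc_mem hvc).2, y, hy, fun l hl => ?_⟩
    have hvl := hwit l hl
    obtain ⟨q, hql, hq⟩ := hl.succ hvl hvney
    have hqc : q = c := by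
      have : q ∈ {w | N.arc v w} := hq
      rw [hc] at this; exact this
    exact hqc ▸ hql
  refine ⟨c, hvc, hcvis, fun w hw => ?_⟩
  by_contra hwc
  have hvw : N.reach v w := cov_arc_reach hw
  have hvnew : v ≠ w := cov_arc_ne hw
  obtain ⟨l, hl⟩ := reach_isPathFrom hvw
  obtain ⟨q, hql, hq⟩ := hl.succ hl.mem_left hvnew
  have hqc : q = c := by
    have : q ∈ {w | N.arc v w} := hq
    rw [hc] at this; exact this
  have hcwr : N.reach c w := (hl.reach_of_mem (hqc ▸ hql)).2
  have hcnev : c ≠ v := by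
    intro h; subst h; exact hN.acyclic hvc .refl
  exact hw.2.2.2.2 ⟨c, hcvis, hcnev, fun h => hwc h.symm, .single hvc, hcwr⟩

theorem IsPhylo.cov_inDeg_eq_one (hN : N.IsPhylo X) (hv : N.Visible v)
    (hne : v ≠ N.root) (h1 : N.inDeg v = 1) : N.cov.inDeg v = 1 := by
  obtain ⟨p, -, -, hall⟩ := hN.visible_parent hv h1
  obtain ⟨w, hw⟩ := hN.exists_cov_parent hv hne
  have hwp := hall w hw
  subst hwp
  have : {w' | N.cov.arc w' v} = {w} := by
    apply Set.eq_singleton_iff_unique_mem.mpr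
    exact ⟨hw, fun w' hw' => hall w' hw'⟩
  rw [Net.inDeg, this, Set.ncard_singleton]

theorem IsPhylo.cov_outDeg_eq_one (hN : N.IsPhylo X) (hv : N.Visible v)
    (hnl : v ∉ N.leaves) (h1 : N.outDeg v = 1) : N.cov.outDeg v = 1 := by
  obtain ⟨c, -, -, hall⟩ := hN.visible_child hv hnl h1
  obtain ⟨w, hw⟩ := hN.exists_cov_child hv hnl
  have hwc := hall w hw
  subst hwc
  have : {w' | N.cov.arc v w'} = {w} := by
    apply Set.eq_singleton_iff_unique_mem.mpr
    exact ⟨hw, fun w' hw' => hall w' hw'⟩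
  rw [Net.outDeg, this, Set.ncard_singleton]


/-! ### Chains of subdividing vertices -/

theorem tail_dropLast {α : Type*} (l : List α) : l.dropLast.tail = l.tail.dropLast := by
  cases l with
  | nil => rfl
  | cons a t =>
    cases t with
    | nil => rfl
    | cons b t' => simp [List.dropLast_cons₂]

/-- Determinism of chains through `P`-vertices, given that `P`-vertices have unique
`R`-successors. -/
theorem chain_det {R : V → V → Prop} {P : V → Prop}
    (hdet : ∀ a b c, P a → R a b → R a c → b = c) :
    ∀ l1 l2 : List V, l1.Chain' R → l2.Chain' R → l1.head? = l2.head? →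
      (∀ x ∈ l1.dropLast, P x) → (∀ x ∈ l2.dropLast, P x) →
      (∀ x, l1.getLast? = some x → ¬ P x) → (∀ x, l2.getLast? = some x → ¬ P x) →
      l1 = l2 := by
  intro l1
  induction l1 with
  | nil =>
    intro l2 _ _ hh _ _ _ _
    cases l2 with
    | nil => rfl
    | cons b t => simp at hh
  | cons a t ih =>
    intro l2 hc1 hc2 hh hP1 hP2 hL1 hL2
    cases l2 with
    | nil => simp at hh
    | cons b t2 =>
      obtain rfl : b = a := by simpa using hh.symm
      clear hh
      cases t with
      | nil =>
        cases t2 with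
        | nil => rfl
        | cons c t2' =>
          have hPa : P b := hP2 b (by rw [List.dropLast_cons₂]; simp)
          exact absurd hPa (hL1 b (by simp))
      | cons c t' =>
        cases t2 with
        | nil =>
          have hPa : P b := hP1 b (by rw [List.dropLast_cons₂]; simp)
          exact absurd hPa (hL2 b (by simp))
        | cons d t2' =>
          have hPa : P b := hP1 b (by rw [List.dropLast_cons₂]; simp)
          obtain rfl : d = c :=
            (hdet b c d hPa (List.isChain_cons_cons.mp hc1).1 (List.isChain_cons_cons.mp hc2).1).symm
          have heq := ih (d :: t2') (List.isChain_cons_cons.mp hc1).2 (List.isChain_cons_cons.mp hc2).2 rfl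
            (fun x hx => hP1 x (by rw [List.dropLast_cons₂]; exact List.mem_cons_of_mem b hx))
            (fun x hx => hP2 x (by rw [List.dropLast_cons₂]; exact List.mem_cons_of_mem b hx))
            (fun x hx => hL1 x (by rw [List.getLast?_cons_cons]; exact hx))
            (fun x hx => hL2 x (by rw [List.getLast?_cons_cons]; exact hx))
          rw [heq]

theorem IsPhylo.cov_sub_det (hN : N.IsPhylo X) :
    ∀ a b c, N.cov.Subdividing a → N.cov.arc a b → N.cov.arc a c → b = c :=
  fun _ b c ha hb hc => eq_of_ncard_eq_one (S := {w | N.cov.arc _ w}) ha.2 hb hc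

theorem IsPhylo.cov_sub_det' (hN : N.IsPhylo X) :
    ∀ a b c, N.cov.Subdividing a → N.cov.op.arc a b → N.cov.op.arc a c → b = c :=
  fun a b c ha hb hc => eq_of_ncard_eq_one (S := {w | N.cov.arc w a}) ha.1 hb hc

/-- Walking backwards from a visible vertex through cov-subdividing vertices
terminates at a non-subdividing visible vertex. -/
theorem IsPhylo.exists_backChain (hN : N.IsPhylo X) {w : V} (hw : N.Visible w) :
    ∃ u l, N.Visible u ∧ ¬ N.cov.Subdividing u ∧ N.cov.IsPathFrom u w l ∧
      ∀ x ∈ l.tail, N.cov.Subdividing x := by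
  generalize hn : {x ∈ N.verts | N.reach x w}.ncard = n
  induction n using Nat.strong_induction_on generalizing w with
  | _ n ih =>
    by_cases hsub : N.cov.Subdividing w
    · obtain ⟨p, hp⟩ := Set.ncard_eq_one.mp hsub.1
      have hpw : N.cov.arc p w := by
        have : p ∈ {u | N.cov.arc u w} := hp ▸ Set.mem_singleton p
        exact this
      have hpvis : N.Visible p := cov_arc_vis_left hpw
      have hlt := hN.ancCard_lt (cov_arc_reach hpw) (cov_arc_ne hpw) hw.1
      obtain ⟨u, l, hu1, hu2, hu3, hu4⟩ := ih _ (hn ▸ hlt) hpvis rfl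
      have hpath2 : N.cov.IsPathFrom p w [p, w] :=
        isPathFrom_cons_cons.mpr ⟨rfl, hpw, isPathFrom_singleton.mpr ⟨rfl, rfl⟩⟩
      have hfull := hu3.append hpath2
      refine ⟨u, l ++ [w], hu1, hu2, by simpa using hfull, ?_⟩
      rw [List.tail_append_of_ne_nil hu3.ne_nil]
      intro x hx
      rcases List.mem_append.mp hx with hx | hx
      · exact hu4 x hx
      · have : x = w := by simpa using hx
        exact this ▸ hsub
    · exact ⟨w, [w], hw, hsub, isPathFrom_singleton.mpr ⟨rfl, rfl⟩, by simp⟩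

/-- Walking forwards from a visible vertex through cov-subdividing vertices
terminates at a non-subdividing visible vertex. -/
theorem IsPhylo.exists_fwdChain (hN : N.IsPhylo X) {w : V} (hw : N.Visible w) :
    ∃ u l, N.Visible u ∧ ¬ N.cov.Subdividing u ∧ N.cov.IsPathFrom w u l ∧
      ∀ x ∈ l.dropLast, N.cov.Subdividing x := by
  generalize hn : {x ∈ N.verts | N.reach w x}.ncard = n
  induction n using Nat.strong_induction_on generalizing w with
  | _ n ih =>
    by_cases hsub : N.cov.Subdividing w
    · obtain ⟨c, hc⟩ := Set.ncard_eq_one.mp hsub.2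
      have hwc : N.cov.arc w c := by
        have : c ∈ {u | N.cov.arc w u} := hc ▸ Set.mem_singleton c
        exact this
      have hcvis : N.Visible c := cov_arc_vis_right hwc
      have hlt := hN.descCard_lt (cov_arc_reach hwc) (cov_arc_ne hwc) hw.1
      obtain ⟨u, l, hu1, hu2, hu3, hu4⟩ := ih _ (hn ▸ hlt) hcvis rfl
      have hpath2 : N.cov.IsPathFrom w c [w, c] :=
        isPathFrom_cons_cons.mpr ⟨rfl, hwc, isPathFrom_singleton.mpr ⟨rfl, rfl⟩⟩
      have hfull := hpath2.append hu3
      have hlform : [w, c] ++ l.tail = w :: l := by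
        cases l with
        | nil => exact absurd rfl hu3.ne_nil
        | cons e t =>
          obtain rfl : e = c := by simpa using hu3.2.1
          rfl
      rw [hlform] at hfull
      refine ⟨u, w :: l, hu1, hu2, hfull, ?_⟩
      intro x hx
      cases l with
      | nil => exact absurd rfl hu3.ne_nil
      | cons e t =>
        rw [List.dropLast_cons₂] at hx
        rcases List.mem_cons.mp hx with rfl | hx
        · exact hsub
        · exact hu4 x hx
    · exact ⟨w, [w], hw, hsub, isPathFrom_singleton.mpr ⟨rfl, rfl⟩, by simp⟩

/-- Characterisation of normalise-arcs: a backward chain followed by one cov-arc. -/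
theorem normalise_arc_iff {u v : V} :
    N.normalise.arc u v ↔
      (N.Visible u ∧ ¬N.cov.Subdividing u) ∧ (N.Visible v ∧ ¬N.cov.Subdividing v) ∧
      ∃ w l, N.cov.IsPathFrom u w l ∧ (∀ x ∈ l.tail, N.cov.Subdividing x) ∧
        N.cov.arc w v := by
  constructor
  · rintro ⟨h1, h2, m, hm, hlen, hint⟩
    refine ⟨h1, h2, ?_⟩
    have hmne : m ≠ [] := hm.ne_nil
    have hdne : m.dropLast ≠ [] := by
      intro h
      have h2 := congrArg List.length h
      rw [List.length_dropLast] at h2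
      simp at h2
      omega
    have hlast : m.getLast hmne = v := by
      have h3 := hm.2.2
      rw [List.getLast?_eq_getLast hmne] at h3
      exact Option.some_injective _ h3
    have hm2 : m = m.dropLast ++ [v] := by
      conv_lhs => rw [← List.dropLast_append_getLast hmne]
      rw [hlast]
    have hwne := hdne
    have hwlast : m.dropLast.getLast? = some (m.dropLast.getLast hdne) :=
      List.getLast?_eq_getLast hdne
    set w := m.dropLast.getLast hdne with hw
    have hchain := hm.1
    simp only [List.Chain'] at hchain; rw [hm2, List.isChain_append] at hchain
    obtain ⟨hch1, -, hlink⟩ := hchain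
    have harc : N.cov.arc w v := hlink w hwlast v rfl
    refine ⟨w, m.dropLast, ⟨hch1, ?_, hwlast⟩, ?_, harc⟩
    · have h4 := hm.2.1
      rw [hm2, List.head?_append] at h4
      rw [List.head?_eq_head hdne] at h4 ⊢
      simpa using h4
    · intro x hx
      apply hint
      rw [tail_dropLast] at hx
      exact hx
  · rintro ⟨h1, h2, w, l, hl, hsub, hwv⟩
    have hpath2 : N.cov.IsPathFrom w v [w, v] :=
      isPathFrom_cons_cons.mpr ⟨rfl, hwv, isPathFrom_singleton.mpr ⟨rfl, rfl⟩⟩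
    have hfull := hl.append hpath2
    refine ⟨h1, h2, l ++ [v], by simpa using hfull, ?_, ?_⟩
    · have : l.length ≠ 0 := fun h => hl.ne_nil (List.length_eq_zero_iff.mp h)
      rw [List.length_append]
      simp
      omega
    · intro x hx
      rw [List.tail_append_of_ne_nil hl.ne_nil, List.dropLast_concat] at hx
      exact hsub x hx

/-- Characterisation of normalise-arcs: one cov-arc followed by a forward chain. -/
theorem normalise_arc_iff' {u v : V} :
    N.normalise.arc u v ↔
      (N.Visible u ∧ ¬N.cov.Subdividing u) ∧ (N.Visible v ∧ ¬N.cov.Subdividing v) ∧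
      ∃ w l, N.cov.arc u w ∧ N.cov.IsPathFrom w v l ∧
        ∀ x ∈ l.dropLast, N.cov.Subdividing x := by
  constructor
  · rintro ⟨h1, h2, m, hm, hlen, hint⟩
    refine ⟨h1, h2, ?_⟩
    cases m with
    | nil => exact absurd rfl hm.ne_nil
    | cons a t =>
      cases t with
      | nil => simp at hlen
      | cons b t' =>
        obtain ⟨rfl, hab, hm'⟩ := isPathFrom_cons_cons.mp hm
        refine ⟨b, b :: t', hab, hm', ?_⟩
        intro x hx
        exact hint x (by simpa using hx)
  · rintro ⟨h1, h2, w, l, huw, hl, hsub⟩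
    have hpath2 : N.cov.IsPathFrom u w [u, w] :=
      isPathFrom_cons_cons.mpr ⟨rfl, huw, isPathFrom_singleton.mpr ⟨rfl, rfl⟩⟩
    have hfull := hpath2.append hl
    have hlform : [u, w] ++ l.tail = u :: l := by
      cases l with
      | nil => exact absurd rfl hl.ne_nil
      | cons e t =>
        obtain rfl : e = w := by simpa using hl.2.1
        rfl
    rw [hlform] at hfull
    refine ⟨h1, h2, u :: l, hfull, ?_, ?_⟩
    · have : l.length ≠ 0 := fun h => hl.ne_nil (List.length_eq_zero_iff.mp h)
      simp only [List.length_cons]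
      omega
    · intro x hx
      simp only [List.tail_cons] at hx
      exact hsub x hx


theorem reverse_tail {α : Type*} (l : List α) : l.reverse.tail = l.dropLast.reverse := by
  rcases eq_or_ne l [] with rfl | h
  · rfl
  · conv_lhs => rw [← List.dropLast_append_getLast h]
    rw [List.reverse_append, List.reverse_singleton, List.singleton_append, List.tail_cons]

theorem reverse_dropLast {α : Type*} (l : List α) : l.reverse.dropLast = l.tail.reverse := by
  cases l with
  | nil => rfl
  | cons a t =>
    rw [show (a :: t).reverse = t.reverse ++ [a] from List.reverse_cons,
      List.dropLast_concat, List.tail_cons]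

theorem arc_ne_of_acyc {M : Net V} (hacyc : ∀ a b, M.arc a b → ¬ M.reach b a)
    {a b : V} (hab : M.arc a b) : a ≠ b :=
  fun he => hacyc a b hab (he ▸ Relation.ReflTransGen.refl)

theorem reach_antisymm_of_acyc {M : Net V} (hacyc : ∀ a b, M.arc a b → ¬ M.reach b a)
    {a b : V} (h1 : M.reach a b) (h2 : M.reach b a) : a = b := by
  rcases h1.cases_head with rfl | ⟨c, hac, hcv⟩
  · rfl
  · exact absurd (hcv.trans h2) (hacyc _ _ hac)

/-- The key combinatorial lemma: two chains of `P`-vertices from the same start `u`,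
each followed by one arc into `v`, must enter `v` by the same arc; otherwise the
second vertex of the first chain avoids the entire second chain. -/
theorem merge_cases {M : Net V} {P : V → Prop}
    (hacyc : ∀ a b, M.arc a b → ¬ M.reach b a)
    (hdet : ∀ a b c, P a → M.arc a b → M.arc a c → b = c)
    (hbet : ∀ a b x, M.arc a b → P x → M.reach a x → M.reach x b → x = a ∨ x = b)
    {u v w1 w2 : V} {l1 l2 : List V} (hv : ¬ P v)
    (h1 : M.IsPathFrom u w1 l1) (hs1 : ∀ x ∈ l1.tail, P x) (ha1 : M.arc w1 v)
    (h2 : M.IsPathFrom u w2 l2) (hs2 : ∀ x ∈ l2.tail, P x) (ha2 : M.arc w2 v)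
    (hne : w1 ≠ w2) :
    ∃ a1 r1, l1 = u :: a1 :: r1 ∧ P a1 ∧ M.arc u a1 ∧
      M.IsPathFrom a1 v ((a1 :: r1) ++ [v]) ∧ (∀ x ∈ a1 :: r1, P x) ∧
      a1 ∉ l2 ++ [v] ∧ M.IsPathFrom u v (l2 ++ [v]) := by
  have hm2 : M.IsPathFrom u v (l2 ++ [v]) := by
    have hp2 : M.IsPathFrom w2 v [w2, v] :=
      isPathFrom_cons_cons.mpr ⟨rfl, ha2, isPathFrom_singleton.mpr ⟨rfl, rfl⟩⟩
    simpa using h2.append hp2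
  cases l1 with
  | nil => exact absurd rfl h1.ne_nil
  | cons x1 r1' =>
    obtain rfl : u = x1 := by simpa using h1.2.1.symm
    cases r1' with
    | nil =>
      -- l1 = [u] : w1 = u and M.arc u v
      obtain rfl : u = w1 := by simpa using h1.2.2
      exfalso
      cases l2 with
      | nil => exact h2.ne_nil rfl
      | cons x2 t2 =>
        obtain rfl : u = x2 := by simpa using h2.2.1.symm
        cases t2 with
        | nil =>
          obtain rfl : u = w2 := by simpa using h2.2.2
          exact hne rfl
        | cons b1 r2 =>
          obtain ⟨-, hub1, h2'⟩ := isPathFrom_cons_cons.mp h2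
          have hPb1 : P b1 := hs2 b1 (by simp)
          have hb1v : M.reach b1 v := h2'.reach.trans (Relation.ReflTransGen.single ha2)
          rcases hbet u v b1 ha1 hPb1 (Relation.ReflTransGen.single hub1) hb1v with h | h
          · exact arc_ne_of_acyc hacyc hub1 h.symm
          · exact hv (h ▸ hPb1)
    | cons a1 r1 =>
      obtain ⟨-, hua1, h1'⟩ := isPathFrom_cons_cons.mp h1
      have hPa1 : P a1 := hs1 a1 (by simp)
      have hs1' : ∀ x ∈ a1 :: r1, P x := fun x hx => hs1 x (by simpa using hx)
      have hpath_s1 : M.IsPathFrom a1 v ((a1 :: r1) ++ [v]) := by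
        have hp1 : M.IsPathFrom w1 v [w1, v] :=
          isPathFrom_cons_cons.mpr ⟨rfl, ha1, isPathFrom_singleton.mpr ⟨rfl, rfl⟩⟩
        simpa using h1'.append hp1
      have ha1nu : a1 ≠ u := Ne.symm (arc_ne_of_acyc hacyc hua1)
      have ha1nv : a1 ≠ v := fun h => hv (h ▸ hPa1)
      cases l2 with
      | nil => exact absurd rfl h2.ne_nil
      | cons x2 t2 =>
        obtain rfl : u = x2 := by simpa using h2.2.1.symm
        cases t2 with
        | nil =>
          -- l2 = [u] : w2 = u and M.arc u v; a1 strictly between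
          obtain rfl : u = w2 := by simpa using h2.2.2
          exfalso
          rcases hbet u v a1 ha2 hPa1 (Relation.ReflTransGen.single hua1) hpath_s1.reach
            with h | h
          · exact ha1nu h
          · exact ha1nv h
        | cons b1 r2 =>
          refine ⟨a1, r1, rfl, hPa1, hua1, hpath_s1, hs1', ?_, hm2⟩
          intro hmem
          rcases List.mem_append.mp hmem with hmem | hmem
          · -- a1 ∈ l2
            have hmem' : a1 ∈ b1 :: r2 := by
              rcases List.mem_cons.mp hmem with h | h
              · exact absurd h ha1nu
              · exact h
            obtain ⟨s, t', hsplit⟩ := List.append_of_mem hmem'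
            have hdecomp : (u :: b1 :: r2) ++ [v] = (u :: s) ++ (a1 :: (t' ++ [v])) := by
              rw [show (u :: b1 :: r2 : List V) = u :: (b1 :: r2) from rfl, hsplit]
              simp
            have hch : ((u :: b1 :: r2) ++ [v]).Chain' M.arc := hm2.1
            simp only [List.Chain'] at hch; rw [hdecomp, List.isChain_append] at hch
            have hch2 : (a1 :: (t' ++ [v])).Chain' M.arc := hch.2.1
            have hglast : (a1 :: (t' ++ [v])).getLast? = some v := by
              rw [← List.cons_append, List.getLast?_concat]
            have hpath_s2 : M.IsPathFrom a1 v (a1 :: (t' ++ [v])) := ⟨hch2, rfl, hglast⟩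
            have hdl2 : (a1 :: (t' ++ [v])).dropLast = a1 :: t' := by
              rw [← List.cons_append, List.dropLast_concat]
            have hPs2 : ∀ x ∈ (a1 :: (t' ++ [v])).dropLast, P x := by
              rw [hdl2]
              intro x hx
              apply hs2
              show x ∈ (b1 :: r2)
              rw [hsplit]
              exact List.mem_append_right s hx
            have hdl1 : ((a1 :: r1) ++ [v]).dropLast = a1 :: r1 := List.dropLast_concat
            have heq := chain_det hdet ((a1 :: r1) ++ [v]) (a1 :: (t' ++ [v]))
              hpath_s1.1 hch2
              (by rw [List.head?_append]; rfl)
              (by rw [hdl1]; exact hs1')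
              hPs2
              (fun x hx => by
                rw [List.getLast?_concat, Option.some.injEq] at hx
                exact hx ▸ hv)
              (fun x hx => by
                rw [hglast, Option.some.injEq] at hx
                exact hx ▸ hv)
            -- compare second-to-last entries
            have hdleq : a1 :: r1 = a1 :: t' := by
              have := congrArg List.dropLast heq
              rwa [hdl1, hdl2] at this
            have hw1 : (a1 :: r1).getLast? = some w1 := by
              have := h1.2.2
              rwa [List.getLast?_cons_cons] at this
            obtain ⟨z, hz⟩ : ∃ z, (a1 :: t').getLast? = some z :=
              ⟨(a1 :: t').getLast (by simp), List.getLast?_eq_getLast (by simp)⟩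
            have hw2 : z = w2 := by
              have h22 := h2.2.2
              rw [List.getLast?_cons_cons, hsplit, List.getLast?_append, hz] at h22
              simpa using h22
            rw [hdleq, hz] at hw1
            exact hne (by rw [← hw2]; exact (Option.some.injEq _ _).mp hw1.symm ▸ rfl)
          · exact ha1nv (by simpa using hmem)

theorem IsPhylo.cov_acyc (hN : N.IsPhylo X) : ∀ a b, N.cov.arc a b → ¬ N.cov.reach b a :=
  fun a b hab hba =>
    (cov_arc_ne hab) (hN.reach_antisymm (cov_arc_reach hab) (cov_reach_reach hba))

theorem IsPhylo.cov_op_acyc (hN : N.IsPhylo X) :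
    ∀ a b, N.cov.op.arc a b → ¬ N.cov.op.reach b a :=
  fun _ _ hab hba =>
    (cov_arc_ne hab)
      (hN.reach_antisymm (cov_arc_reach hab) (cov_reach_reach (op_reach.mp hba)))

theorem IsPhylo.sub_visible (hN : N.IsPhylo X) {x : V} (hx : N.cov.Subdividing x) :
    N.Visible x := by
  obtain ⟨p, hp⟩ := Set.ncard_eq_one.mp hx.1
  have hpx : N.cov.arc p x := by
    have : p ∈ {u | N.cov.arc u x} := hp ▸ Set.mem_singleton p
    exact this
  exact cov_arc_vis_right hpx

theorem IsPhylo.cov_between (hN : N.IsPhylo X) :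
    ∀ a b x, N.cov.arc a b → N.cov.Subdividing x → N.cov.reach a x → N.cov.reach x b →
      x = a ∨ x = b := by
  intro a b x hab hx hax hxb
  by_cases h1 : x = a
  · exact Or.inl h1
  by_cases h2 : x = b
  · exact Or.inr h2
  exact absurd ⟨x, hN.sub_visible hx, h1, h2, cov_reach_reach hax, cov_reach_reach hxb⟩
    hab.2.2.2.2

theorem IsPhylo.cov_op_between (hN : N.IsPhylo X) :
    ∀ a b x, N.cov.op.arc a b → N.cov.Subdividing x → N.cov.op.reach a x →
      N.cov.op.reach x b → x = a ∨ x = b := by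
  intro a b x hab hx hax hxb
  rcases hN.cov_between b a x hab hx (op_reach.mp hxb) (op_reach.mp hax) with h | h
  · exact Or.inr h
  · exact Or.inl h


theorem hdet_helper (hN : N.IsPhylo X) {a b c : V} (ha : N.cov.Subdividing a)
    (hb : N.cov.arc a b) (hc : N.cov.arc a c) : b = c :=
  eq_of_ncard_eq_one (S := {w | N.cov.arc a w}) ha.2 hb hc

/-- Every visible vertex reachable (in `N`) from the head of a forward chain of
cov-subdividing vertices is on the chain or reachable from its end. -/
theorem IsPhylo.chain_desc (hN : N.IsPhylo X) :
    ∀ l : List V, ∀ a v d : V, N.cov.IsPathFrom a v l →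
      (∀ x ∈ l.dropLast, N.cov.Subdividing x) →
      N.Visible d → N.reach a d → d ∈ l ∨ N.reach v d := by
  intro l
  induction l with
  | nil => intro a v d h _ _ _; exact absurd rfl h.ne_nil
  | cons b r ih =>
    intro a v d h hsub hd had
    obtain rfl : a = b := by simpa using h.2.1.symm
    cases r with
    | nil =>
      obtain ⟨-, rfl⟩ := isPathFrom_singleton.mp h
      exact Or.inr had
    | cons c r' =>
      obtain ⟨-, hac, h'⟩ := isPathFrom_cons_cons.mp h
      by_cases hda : d = a
      · exact Or.inl (by simp [hda])
      · have hsa : N.cov.Subdividing a := hsub a (by rw [List.dropLast_cons₂]; simp)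
        have hsubS : {w | N.Visible w ∧ N.reach a w ∧ N.reach w d ∧ w ≠ a} ⊆ N.verts :=
          fun w hw => hw.1.1
        have hSne : {w | N.Visible w ∧ N.reach a w ∧ N.reach w d ∧ w ≠ a}.Nonempty :=
          ⟨d, hd, had, Relation.ReflTransGen.refl, hda⟩
        obtain ⟨mv, hmS, hmin⟩ := hN.exists_min_reach hsubS hSne
        have harc : N.cov.arc a mv := by
          refine ⟨cov_arc_vis_left hac, hmS.1, fun h => hmS.2.2.2 h.symm, hmS.2.1, ?_⟩
          rintro ⟨w', hw'vis, hw'na, hw'nm, haw', hw'm⟩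
          exact hw'nm (hmin w' ⟨hw'vis, haw', hw'm.trans hmS.2.2.1, hw'na⟩ hw'm)
        have hmc : mv = c := hdet_helper hN hsa harc hac
        have hcd : N.reach c d := hmc ▸ hmS.2.2.1
        have hsub' : ∀ x ∈ (c :: r').dropLast, N.cov.Subdividing x := by
          intro x hx
          apply hsub
          rw [List.dropLast_cons₂]
          exact List.mem_cons_of_mem a hx
        rcases ih c v d h' hsub' hd hcd with h | h
        · exact Or.inl (List.mem_cons_of_mem a h)
        · exact Or.inr h

theorem IsPhylo.avoid_of_cov_arc (hN : N.IsPhylo X) {s t a : V} (hst : N.cov.arc s t)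
    (ha : N.Visible a) (has : a ≠ s) (hat : a ≠ t) :
    ∃ P, N.IsPathFrom s t P ∧ a ∉ P := by
  obtain ⟨P, hP⟩ := reach_isPathFrom (cov_arc_reach hst)
  refine ⟨P, hP, fun haP => ?_⟩
  obtain ⟨hr1, hr2⟩ := hP.reach_of_mem haP
  exact hst.2.2.2.2 ⟨a, ha, has, hat, hr1, hr2⟩

theorem IsPhylo.avoid_along_cov_path (hN : N.IsPhylo X) {s t a : V} {l : List V}
    (hl : N.cov.IsPathFrom s t l) (ha : N.Visible a) (hnotin : a ∉ l) :
    ∃ P, N.IsPathFrom s t P ∧ a ∉ P := by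
  induction l generalizing s with
  | nil => exact absurd rfl hl.ne_nil
  | cons b r ih =>
    obtain rfl : s = b := by simpa using hl.2.1.symm
    cases r with
    | nil =>
      have hst := isPathFrom_singleton.mp hl
      refine ⟨[s], isPathFrom_singleton.mpr ⟨rfl, hst.2⟩, ?_⟩
      intro h
      exact hnotin (by simpa using h)
    | cons c r' =>
      obtain ⟨-, hsc, hl'⟩ := isPathFrom_cons_cons.mp hl
      have hanotc : a ∉ c :: r' := fun h => hnotin (List.mem_cons_of_mem s h)
      have hans : a ≠ s := fun h => hnotin (by simp [h])
      have hanc : a ≠ c := fun h => hanotc (by simp [h])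
      obtain ⟨P1, hP1, ha1⟩ := hN.avoid_of_cov_arc hsc ha hans hanc
      obtain ⟨P2, hP2, ha2⟩ := ih hl' hanotc
      refine ⟨P1 ++ P2.tail, hP1.append hP2, fun h => ?_⟩
      rcases mem_append_tail h with h | h
      · exact ha1 h
      · exact ha2 h


theorem hdet_helper' (hN : N.IsPhylo X) {a b c : V} (ha : N.cov.Subdividing a)
    (hb : N.cov.op.arc a b) (hc : N.cov.op.arc a c) : b = c :=
  eq_of_ncard_eq_one (S := {w | N.cov.arc w a}) ha.1 hb hc

/-- Two backward chains from the same non-subdividing start, each followed by one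
cov-arc into `v`, enter `v` by the same arc. -/
theorem IsPhylo.backChain_inj (hN : N.IsPhylo X) {u v w1 w2 : V} {l1 l2 : List V}
    (hv : ¬ N.cov.Subdividing v)
    (h1 : N.cov.IsPathFrom u w1 l1) (hs1 : ∀ x ∈ l1.tail, N.cov.Subdividing x)
    (ha1 : N.cov.arc w1 v)
    (h2 : N.cov.IsPathFrom u w2 l2) (hs2 : ∀ x ∈ l2.tail, N.cov.Subdividing x)
    (ha2 : N.cov.arc w2 v) : w1 = w2 := by
  by_contra hne
  obtain ⟨a1, r1, hl1eq, hPa1, hua1, hpath1, hsall, hnotin, hm2⟩ :=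
    merge_cases hN.cov_acyc (fun _ _ _ ha hb hc => hdet_helper hN ha hb hc)
      hN.cov_between hv h1 hs1 ha1 h2 hs2 ha2 hne
  have ha1vis : N.Visible a1 := cov_arc_vis_right hua1
  have huvis : N.Visible u := cov_arc_vis_left hua1
  obtain ⟨ya, hya, haya, hwit⟩ := hN.witness_reach ha1vis
  have hreach_a1v : N.reach a1 v := cov_reach_reach hpath1.reach
  have hvya : N.reach v ya := by
    have hds : ∀ x ∈ ((a1 :: r1) ++ [v]).dropLast, N.cov.Subdividing x := by
      rw [List.dropLast_concat]; exact hsall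
    rcases hN.chain_desc _ a1 v ya hpath1 hds (leaf_visible hya) haya with hmem | h
    · rcases List.mem_append.mp hmem with hmem | hmem
      · exact absurd (hsall ya hmem) (hN.leaf_not_sub hya)
      · have hyav : ya = v := by simpa using hmem
        exact hyav ▸ Relation.ReflTransGen.refl
    · exact h
  obtain ⟨P0, hP0⟩ := reach_isPathFrom (hN.root_reach huvis.1)
  have hP0a : a1 ∉ P0 := by
    intro h
    have h1r := (hP0.reach_of_mem h).2
    have h2r := cov_arc_reach hua1
    exact cov_arc_ne hua1 (hN.reach_antisymm h2r h1r)
  obtain ⟨P1, hP1, hP1a⟩ := hN.avoid_along_cov_path hm2 ha1vis hnotin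
  obtain ⟨P2, hP2⟩ := reach_isPathFrom hvya
  have hP2a : a1 ∉ P2 := by
    intro h
    have hva1 := (hP2.reach_of_mem h).1
    have hav : a1 = v := hN.reach_antisymm hreach_a1v hva1
    exact hv (hav ▸ hPa1)
  have hPP := hP0.append (hP1.append hP2)
  have hmem := hwit _ hPP
  rcases mem_append_tail hmem with h | h
  · exact hP0a h
  · rcases mem_append_tail h with h | h
    · exact hP1a h
    · exact hP2a h

/-- Dual: two forward chains to the same non-subdividing end, each preceded by one
cov-arc out of `v`, leave `v` by the same arc. -/
theorem IsPhylo.fwdChain_inj (hN : N.IsPhylo X) {u v w1 w2 : V} {l1 l2 : List V}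
    (hvvis : N.Visible v) (hv : ¬ N.cov.Subdividing v)
    (h1 : N.cov.IsPathFrom w1 u l1) (hs1 : ∀ x ∈ l1.dropLast, N.cov.Subdividing x)
    (ha1 : N.cov.arc v w1)
    (h2 : N.cov.IsPathFrom w2 u l2) (hs2 : ∀ x ∈ l2.dropLast, N.cov.Subdividing x)
    (ha2 : N.cov.arc v w2) : w1 = w2 := by
  by_contra hne
  have h1' : N.cov.op.IsPathFrom u w1 l1.reverse := isPathFrom_reverse.mpr h1
  have h2' : N.cov.op.IsPathFrom u w2 l2.reverse := isPathFrom_reverse.mpr h2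
  have hs1' : ∀ x ∈ l1.reverse.tail, N.cov.Subdividing x := by
    rw [reverse_tail]; intro x hx; exact hs1 x (List.mem_reverse.mp hx)
  have hs2' : ∀ x ∈ l2.reverse.tail, N.cov.Subdividing x := by
    rw [reverse_tail]; intro x hx; exact hs2 x (List.mem_reverse.mp hx)
  have ha1' : N.cov.op.arc w1 v := ha1
  have ha2' : N.cov.op.arc w2 v := ha2
  obtain ⟨a1, r1, hl1eq, hPa1, hua1, hpath1, hsall, hnotin, hm2⟩ :=
    merge_cases hN.cov_op_acyc (fun _ _ _ ha hb hc => hdet_helper' hN ha hb hc)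
      hN.cov_op_between hv h1' hs1' ha1' h2' hs2' ha2' hne
  have hca1u : N.cov.arc a1 u := hua1
  have ha1vis : N.Visible a1 := cov_arc_vis_left hca1u
  obtain ⟨ya, hya, haya, hwit⟩ := hN.witness_reach ha1vis
  have hpath1' : N.cov.IsPathFrom v a1 (((a1 :: r1) ++ [v]).reverse) := by
    rw [← List.reverse_reverse ((a1 :: r1) ++ [v])] at hpath1
    exact isPathFrom_reverse.mp hpath1
  have hreach_va1 : N.reach v a1 := cov_reach_reach hpath1'.reach
  have hpau : N.cov.IsPathFrom a1 u [a1, u] :=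
    isPathFrom_cons_cons.mpr ⟨rfl, hca1u, isPathFrom_singleton.mpr ⟨rfl, rfl⟩⟩
  have huya : N.reach u ya := by
    have hds : ∀ x ∈ ([a1, u] : List V).dropLast, N.cov.Subdividing x := by
      intro x hx
      have hxa : x = a1 := by simpa using hx
      exact hxa ▸ hPa1
    rcases hN.chain_desc _ a1 u ya hpau hds (leaf_visible hya) haya with hmem | h
    · rcases List.mem_cons.mp hmem with h | h
      · exact absurd (h ▸ hPa1) (hN.leaf_not_sub hya)
      · have hyu : ya = u := by simpa using h
        exact hyu ▸ Relation.ReflTransGen.refl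
    · exact h
  obtain ⟨P0, hP0⟩ := reach_isPathFrom (hN.root_reach hvvis.1)
  have hP0a : a1 ∉ P0 := by
    intro h
    have h1r := (hP0.reach_of_mem h).2
    have hav : a1 = v := hN.reach_antisymm h1r hreach_va1
    exact hv (hav ▸ hPa1)
  have hm2' : N.cov.IsPathFrom v u ((l2.reverse ++ [v]).reverse) := by
    rw [← List.reverse_reverse (l2.reverse ++ [v])] at hm2
    exact isPathFrom_reverse.mp hm2
  have hnotin' : a1 ∉ (l2.reverse ++ [v]).reverse := fun h => hnotin (List.mem_reverse.mp h)
  obtain ⟨P1, hP1, hP1a⟩ := hN.avoid_along_cov_path hm2' ha1vis hnotin'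
  obtain ⟨P2, hP2⟩ := reach_isPathFrom huya
  have hP2a : a1 ∉ P2 := by
    intro h
    have hur := (hP2.reach_of_mem h).1
    have h2r : N.reach a1 u := cov_arc_reach hca1u
    exact cov_arc_ne hca1u (hN.reach_antisymm h2r hur)
  have hPP := hP0.append (hP1.append hP2)
  have hmem := hwit _ hPP
  rcases mem_append_tail hmem with h | h
  · exact hP0a h
  · rcases mem_append_tail h with h | h
    · exact hP1a h
    · exact hP2a h

theorem IsPhylo.fwdChain_unique (hN : N.IsPhylo X) {w u1 u2 : V} {l1 l2 : List V}
    (h1 : N.cov.IsPathFrom w u1 l1) (hs1 : ∀ x ∈ l1.dropLast, N.cov.Subdividing x)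
    (hn1 : ¬ N.cov.Subdividing u1)
    (h2 : N.cov.IsPathFrom w u2 l2) (hs2 : ∀ x ∈ l2.dropLast, N.cov.Subdividing x)
    (hn2 : ¬ N.cov.Subdividing u2) : u1 = u2 := by
  have heq := chain_det (fun _ _ _ ha hb hc => hdet_helper hN ha hb hc) l1 l2 h1.1 h2.1
    (by rw [h1.2.1, h2.2.1]) hs1 hs2
    (fun x hx => by rw [h1.2.2, Option.some.injEq] at hx; exact hx ▸ hn1)
    (fun x hx => by rw [h2.2.2, Option.some.injEq] at hx; exact hx ▸ hn2)
  have h3 := h1.2.2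
  rw [heq, h2.2.2] at h3
  exact ((Option.some.injEq _ _).mp h3).symm

theorem IsPhylo.backChain_unique (hN : N.IsPhylo X) {w u1 u2 : V} {l1 l2 : List V}
    (h1 : N.cov.IsPathFrom u1 w l1) (hs1 : ∀ x ∈ l1.tail, N.cov.Subdividing x)
    (hn1 : ¬ N.cov.Subdividing u1)
    (h2 : N.cov.IsPathFrom u2 w l2) (hs2 : ∀ x ∈ l2.tail, N.cov.Subdividing x)
    (hn2 : ¬ N.cov.Subdividing u2) : u1 = u2 := by
  have h1' : N.cov.op.IsPathFrom w u1 l1.reverse := isPathFrom_reverse.mpr h1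
  have h2' : N.cov.op.IsPathFrom w u2 l2.reverse := isPathFrom_reverse.mpr h2
  have hs1' : ∀ x ∈ l1.reverse.dropLast, N.cov.Subdividing x := by
    rw [reverse_dropLast]; intro x hx; exact hs1 x (List.mem_reverse.mp hx)
  have hs2' : ∀ x ∈ l2.reverse.dropLast, N.cov.Subdividing x := by
    rw [reverse_dropLast]; intro x hx; exact hs2 x (List.mem_reverse.mp hx)
  have heq := chain_det (fun _ _ _ ha hb hc => hdet_helper' hN ha hb hc)
    l1.reverse l2.reverse h1'.1 h2'.1
    (by rw [h1'.2.1, h2'.2.1]) hs1' hs2'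
    (fun x hx => by rw [h1'.2.2, Option.some.injEq] at hx; exact hx ▸ hn1)
    (fun x hx => by rw [h2'.2.2, Option.some.injEq] at hx; exact hx ▸ hn2)
  have h3 := h1'.2.2
  rw [heq, h2'.2.2] at h3
  exact ((Option.some.injEq _ _).mp h3).symm

theorem IsPhylo.normalise_inDeg_eq (hN : N.IsPhylo X) {v : V} (hvis : N.Visible v)
    (hnsub : ¬ N.cov.Subdividing v) : N.normalise.inDeg v = N.cov.inDeg v := by
  classical
  set g : V → V := fun w =>
    if h : ∃ u, (N.Visible u ∧ ¬ N.cov.Subdividing u) ∧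
        ∃ l, N.cov.IsPathFrom u w l ∧ ∀ x ∈ l.tail, N.cov.Subdividing x
    then h.choose else w with hgdef
  have hgspec : ∀ w, N.Visible w →
      (N.Visible (g w) ∧ ¬ N.cov.Subdividing (g w)) ∧
      ∃ l, N.cov.IsPathFrom (g w) w l ∧ ∀ x ∈ l.tail, N.cov.Subdividing x := by
    intro w hw
    obtain ⟨u, l, hu1, hu2, hu3, hu4⟩ := hN.exists_backChain hw
    have hex : ∃ u, (N.Visible u ∧ ¬ N.cov.Subdividing u) ∧
        ∃ l, N.cov.IsPathFrom u w l ∧ ∀ x ∈ l.tail, N.cov.Subdividing x :=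
      ⟨u, ⟨hu1, hu2⟩, l, hu3, hu4⟩
    have : g w = hex.choose := by rw [hgdef]; exact dif_pos hex
    rw [this]
    exact hex.choose_spec
  have himg : {u | N.normalise.arc u v} = g '' {w | N.cov.arc w v} := by
    ext u
    simp only [Set.mem_setOf_eq, Set.mem_image]
    constructor
    · intro hu
      obtain ⟨hu1, hv1, w, l, hl, hsub, hwv⟩ := normalise_arc_iff.mp hu
      refine ⟨w, hwv, ?_⟩
      obtain ⟨hgw1, lg, hlg, hsubg⟩ := hgspec w (cov_arc_vis_left hwv)
      exact hN.backChain_unique hlg hsubg hgw1.2 hl hsub hu1.2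
    · rintro ⟨w, hwv, rfl⟩
      obtain ⟨hgw1, lg, hlg, hsubg⟩ := hgspec w (cov_arc_vis_left hwv)
      exact normalise_arc_iff.mpr ⟨hgw1, ⟨hvis, hnsub⟩, w, lg, hlg, hsubg, hwv⟩
  have hinj : Set.InjOn g {w | N.cov.arc w v} := by
    intro w1 hw1 w2 hw2 heq
    obtain ⟨hg1, l1, hl1, hsb1⟩ := hgspec w1 (cov_arc_vis_left hw1)
    obtain ⟨hg2, l2, hl2, hsb2⟩ := hgspec w2 (cov_arc_vis_left hw2)
    rw [heq] at hl1
    exact hN.backChain_inj hnsub hl1 hsb1 hw1 hl2 hsb2 hw2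
  show {u | N.normalise.arc u v}.ncard = {w | N.cov.arc w v}.ncard
  rw [himg, Set.ncard_image_of_injOn hinj]

theorem IsPhylo.normalise_outDeg_eq (hN : N.IsPhylo X) {v : V} (hvis : N.Visible v)
    (hnsub : ¬ N.cov.Subdividing v) : N.normalise.outDeg v = N.cov.outDeg v := by
  classical
  set g : V → V := fun w =>
    if h : ∃ u, (N.Visible u ∧ ¬ N.cov.Subdividing u) ∧
        ∃ l, N.cov.IsPathFrom w u l ∧ ∀ x ∈ l.dropLast, N.cov.Subdividing x
    then h.choose else w with hgdef
  have hgspec : ∀ w, N.Visible w →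
      (N.Visible (g w) ∧ ¬ N.cov.Subdividing (g w)) ∧
      ∃ l, N.cov.IsPathFrom w (g w) l ∧ ∀ x ∈ l.dropLast, N.cov.Subdividing x := by
    intro w hw
    obtain ⟨u, l, hu1, hu2, hu3, hu4⟩ := hN.exists_fwdChain hw
    have hex : ∃ u, (N.Visible u ∧ ¬ N.cov.Subdividing u) ∧
        ∃ l, N.cov.IsPathFrom w u l ∧ ∀ x ∈ l.dropLast, N.cov.Subdividing x :=
      ⟨u, ⟨hu1, hu2⟩, l, hu3, hu4⟩
    have : g w = hex.choose := by rw [hgdef]; exact dif_pos hex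
    rw [this]
    exact hex.choose_spec
  have himg : {u | N.normalise.arc v u} = g '' {w | N.cov.arc v w} := by
    ext u
    simp only [Set.mem_setOf_eq, Set.mem_image]
    constructor
    · intro hu
      obtain ⟨hv1, hu1, w, l, hvw, hl, hsub⟩ := normalise_arc_iff'.mp hu
      refine ⟨w, hvw, ?_⟩
      obtain ⟨hgw1, lg, hlg, hsubg⟩ := hgspec w (cov_arc_vis_right hvw)
      exact hN.fwdChain_unique hlg hsubg hgw1.2 hl hsub hu1.2
    · rintro ⟨w, hvw, rfl⟩
      obtain ⟨hgw1, lg, hlg, hsubg⟩ := hgspec w (cov_arc_vis_right hvw)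
      exact normalise_arc_iff'.mpr ⟨⟨hvis, hnsub⟩, hgw1, w, lg, hvw, hlg, hsubg⟩
  have hinj : Set.InjOn g {w | N.cov.arc v w} := by
    intro w1 hw1 w2 hw2 heq
    obtain ⟨hg1, l1, hl1, hsb1⟩ := hgspec w1 (cov_arc_vis_right hw1)
    obtain ⟨hg2, l2, hl2, hsb2⟩ := hgspec w2 (cov_arc_vis_right hw2)
    rw [heq] at hl1
    exact hN.fwdChain_inj hvis hnsub hl1 hsb1 hw1 hl2 hsb2 hw2
  show {u | N.normalise.arc v u}.ncard = {w | N.cov.arc v w}.ncard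
  rw [himg, Set.ncard_image_of_injOn hinj]

theorem IsPhylo.normalise_arc_reach_ne (hN : N.IsPhylo X) {u v : V}
    (h : N.normalise.arc u v) : N.reach u v ∧ u ≠ v := by
  obtain ⟨h1, h2, w, l, hl, hsub, hwv⟩ := normalise_arc_iff.mp h
  have hr : N.reach u v := (cov_reach_reach hl.reach).trans (cov_arc_reach hwv)
  refine ⟨hr, ?_⟩
  intro he
  have huw : N.reach u w := cov_reach_reach hl.reach
  have hvw : N.reach v w := he ▸ huw
  exact cov_arc_ne hwv (hN.reach_antisymm (cov_arc_reach hwv) hvw)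

theorem IsPhylo.normalise_reach_reach (hN : N.IsPhylo X) {u v : V}
    (h : N.normalise.reach u v) : N.reach u v := by
  induction h with
  | refl => exact .refl
  | tail _ hbc ih => exact ih.trans (hN.normalise_arc_reach_ne hbc).1

end Net
/-- The normalisation `Ñ` of a rooted phylogenetic network on `X` is
itself a rooted phylogenetic network on `X` (with the same root `ρ`, which is by
definition the root of `Ñ`). -/
theorem stmt2 {V : Type*} (N : Net V) (X : Set V) (hN : N.IsPhylo X) :
    N.normalise.IsPhylo X := by
  classical
  have hvertsub : N.normalise.verts ⊆ N.verts := fun v hv => hv.1.1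
  have hparents_sub : ∀ v : V, {u | N.normalise.arc u v} ⊆ N.verts :=
    fun v u hu => hu.1.1.1
  have hchildren_sub : ∀ v : V, {u | N.normalise.arc v u} ⊆ N.verts :=
    fun v u hu => hu.2.1.1.1
  -- leaves of the normalisation
  have hleaves : N.normalise.leaves = X := by
    ext x
    constructor
    · rintro ⟨hxv, hxout⟩
      by_contra hxX
      have hxleaf : x ∉ N.leaves := by rw [hN.leaves_eq]; exact hxX
      obtain ⟨w, hw⟩ := hN.exists_cov_child hxv.1 hxleaf
      obtain ⟨u, l, hu1, hu2, hu3, hu4⟩ := hN.exists_fwdChain (Net.cov_arc_vis_right hw)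
      have harc : N.normalise.arc x u :=
        Net.normalise_arc_iff'.mpr ⟨hxv, ⟨hu1, hu2⟩, w, l, hw, hu3, hu4⟩
      have hpos := (Set.ncard_pos ((hN.finite.subset (hchildren_sub x)))).mpr ⟨u, harc⟩
      rw [Net.outDeg] at hxout
      omega
    · intro hxX
      have hxleaf : x ∈ N.leaves := by rw [hN.leaves_eq]; exact hxX
      have hxvis : N.Visible x := Net.leaf_visible hxleaf
      have hxnsub : ¬ N.cov.Subdividing x := hN.leaf_not_sub hxleaf
      have hempty : {w | N.normalise.arc x w} = ∅ := by
        ext w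
        simp only [Set.mem_setOf_eq, Set.mem_empty_iff_false, iff_false]
        intro hw
        obtain ⟨-, -, w', l, hxw', -, -⟩ := Net.normalise_arc_iff'.mp hw
        have he : {w | N.cov.arc x w} = ∅ :=
          (Set.ncard_eq_zero (hN.cov_children_finite x)).mp (hN.leaf_cov_outDeg hxleaf)
        exact absurd hxw' (by rw [Set.eq_empty_iff_forall_notMem] at he; exact he w')
      refine ⟨⟨hxvis, hxnsub⟩, ?_⟩
      rw [Net.outDeg, hempty, Set.ncard_empty]
  refine ⟨?_, hN.nonempty, ?_, ?_, ?_, ?_, ?_, ?_, ?_, ?_⟩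
  · -- finite
    exact hN.finite.subset hvertsub
  · -- arc_mem
    intro u v h
    exact ⟨h.1, h.2.1⟩
  · -- acyclic
    intro u v h hr
    have h1 := hN.normalise_arc_reach_ne h
    have h2 := hN.normalise_reach_reach hr
    exact h1.2 (hN.reach_antisymm h1.1 h2)
  · -- root_mem
    exact ⟨hN.root_visible, hN.root_not_sub⟩
  · -- root_inDeg
    have hempty : {u | N.normalise.arc u N.normalise.root} = ∅ := by
      ext u
      simp only [Set.mem_setOf_eq, Set.mem_empty_iff_false, iff_false]
      intro hu
      obtain ⟨-, -, w, l, -, -, hwv⟩ := Net.normalise_arc_iff.mp hu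
      have he : {w | N.cov.arc w N.root} = ∅ :=
        (Set.ncard_eq_zero (hN.cov_parents_finite N.root)).mp hN.root_cov_inDeg
      exact absurd hwv (by rw [Set.eq_empty_iff_forall_notMem] at he; exact he w)
    rw [Net.inDeg, hempty, Set.ncard_empty]
  · -- root_unique
    intro v hv h0
    by_contra hne
    have hvr : v ≠ N.root := hne
    obtain ⟨w, hw⟩ := hN.exists_cov_parent hv.1 hvr
    obtain ⟨u, l, hu1, hu2, hu3, hu4⟩ := hN.exists_backChain (Net.cov_arc_vis_left hw)
    have harc : N.normalise.arc u v :=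
      Net.normalise_arc_iff.mpr ⟨⟨hu1, hu2⟩, hv, w, l, hu3, hu4, hw⟩
    have hpos := (Set.ncard_pos (hN.finite.subset (hparents_sub v))).mpr ⟨u, harc⟩
    rw [Net.inDeg] at h0
    omega
  · -- leaves_eq
    exact hleaves
  · -- leaf_inDeg
    intro x hxX
    have hxleaf : x ∈ N.leaves := by rw [hN.leaves_eq]; exact hxX
    have hxvis : N.Visible x := Net.leaf_visible hxleaf
    have hxnsub : ¬ N.cov.Subdividing x := hN.leaf_not_sub hxleaf
    have hxr : x ≠ N.root := by
      intro h
      have h1 := hN.leaf_inDeg x hxX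
      rw [h, hN.root_inDeg] at h1
      omega
    rw [hN.normalise_inDeg_eq hxvis hxnsub]
    exact hN.cov_inDeg_eq_one hxvis hxr (hN.leaf_inDeg x hxX)
  · -- interior_deg
    intro v hv hvr hvX
    have hvis : N.Visible v := hv.1
    have hnsub : ¬ N.cov.Subdividing v := hv.2
    have hvroot : v ≠ N.root := hvr
    have hvleaf : v ∉ N.leaves := by rw [hN.leaves_eq]; exact hvX
    have hin := hN.normalise_inDeg_eq hvis hnsub
    have hout := hN.normalise_outDeg_eq hvis hnsub
    have hcovin_pos : 1 ≤ N.cov.inDeg v := by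
      obtain ⟨w, hw⟩ := hN.exists_cov_parent hvis hvroot
      exact (Set.ncard_pos (hN.cov_parents_finite v)).mpr ⟨w, hw⟩
    have hcovout_pos : 1 ≤ N.cov.outDeg v := by
      obtain ⟨w, hw⟩ := hN.exists_cov_child hvis hvleaf
      exact (Set.ncard_pos (hN.cov_children_finite v)).mpr ⟨w, hw⟩
    have hnotboth : ¬(N.cov.inDeg v = 1 ∧ N.cov.outDeg v = 1) := hnsub
    rcases hN.interior_deg v hvis.1 hvroot hvX with ⟨hi, _⟩ | ⟨ho, _⟩
    · left
      have h1 : N.cov.inDeg v = 1 := hN.cov_inDeg_eq_one hvis hvroot hi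
      refine ⟨by rw [hin, h1], ?_⟩
      rw [hout]
      have hne1 : N.cov.outDeg v ≠ 1 := fun h => hnotboth ⟨h1, h⟩
      omega
    · right
      have h1 : N.cov.outDeg v = 1 := hN.cov_outDeg_eq_one hvis hvleaf ho
      refine ⟨by rw [hout, h1], ?_⟩
      rw [hin]
      have hne1 : N.cov.inDeg v ≠ 1 := fun h => hnotboth ⟨h, h1⟩
      omega
end

section
/- Let N be a rooted phylogenetic network on a finite set X and let Ñ be its normalisation. Then Ñ has no vertex whose in-degree and out-degree are both at least 2. -/
section Aux

open Relation

variable {V : Type*}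

namespace NetAux

/-- Every non-last element of a chain has a successor in the list. -/
lemma chain'_mem_succ {r : V → V → Prop} :
    ∀ (l : List V), l.Chain' r → ∀ a ∈ l, ∀ y, l.getLast? = some y → a ≠ y →
      ∃ z, r a z ∧ z ∈ l
  | [] => by simp
  | [x] => by
      intro _ a ha y hy hne
      simp at ha hy
      exact absurd (ha.trans hy) hne
  | x :: x' :: l => by
      intro hc a ha y hy hne
      unfold List.Chain' at hc; rw [List.isChain_cons_cons] at hc
      rcases List.mem_cons.mp ha with h | h
      · exact ⟨x', by rw [h]; exact hc.1, by simp⟩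
      · obtain ⟨z, hz, hzl⟩ := chain'_mem_succ (x' :: l) hc.2 a h y (by simpa using hy) hne
        exact ⟨z, hz, List.mem_cons_of_mem _ hzl⟩

/-- Every non-head element of a chain has a predecessor in the list. -/
lemma chain'_mem_pred {r : V → V → Prop} :
    ∀ (l : List V), l.Chain' r → ∀ a ∈ l, ∀ x, l.head? = some x → a ≠ x →
      ∃ z, r z a ∧ z ∈ l
  | [] => by simp
  | x :: l => by
      intro hc a ha x0 hx0 hne
      simp only [List.head?_cons, Option.some.injEq] at hx0
      subst hx0
      rcases List.mem_cons.mp ha with h | h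
      · exact absurd h hne
      · cases l with
        | nil => simp at h
        | cons y l' =>
          unfold List.Chain' at hc; rw [List.isChain_cons_cons] at hc
          by_cases hay : a = y
          · exact ⟨x, by rw [hay]; exact hc.1, by simp⟩
          · obtain ⟨z, hz, hzl⟩ := chain'_mem_pred (y :: l') hc.2 a h y rfl hay
            exact ⟨z, hz, List.mem_cons_of_mem _ hzl⟩

lemma two_le_ncard {s : Set V} (h : 2 ≤ s.ncard) : ∃ a ∈ s, ∃ b ∈ s, a ≠ b := by
  have hfin : s.Finite := by
    by_contra hinf
    rw [Set.Infinite.ncard hinf] at h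
    omega
  exact (Set.one_lt_ncard hfin).mp (by omega)

lemma outDeg_unique {M : Net V} {v a b : V} (h : M.outDeg v = 1)
    (ha : M.arc v a) (hb : M.arc v b) : a = b := by
  obtain ⟨c, hc⟩ := Set.ncard_eq_one.mp h
  have h1 : a ∈ {w | M.arc v w} := ha
  have h2 : b ∈ {w | M.arc v w} := hb
  rw [hc] at h1 h2
  simp at h1 h2
  rw [h1, h2]

lemma inDeg_unique {M : Net V} {v a b : V} (h : M.inDeg v = 1)
    (ha : M.arc a v) (hb : M.arc b v) : a = b := by
  obtain ⟨c, hc⟩ := Set.ncard_eq_one.mp h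
  have h1 : a ∈ {u | M.arc u v} := ha
  have h2 : b ∈ {u | M.arc u v} := hb
  rw [hc] at h1 h2
  simp at h1 h2
  rw [h1, h2]

/-- chains through subdividing vertices (forward version) are unique. -/
lemma chainS_unique (M : Net V) {c d : V} (hc : ¬ M.Subdividing c) (hd : ¬ M.Subdividing d)
    {x : V} (h1 : Relation.ReflTransGen (fun a b => M.Subdividing a ∧ M.arc a b) x c) :
    Relation.ReflTransGen (fun a b => M.Subdividing a ∧ M.arc a b) x d → c = d := by
  induction h1 using Relation.ReflTransGen.head_induction_on with
  | refl =>
    intro h2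
    rcases Relation.ReflTransGen.cases_head h2 with h | ⟨y, hy, _⟩
    · exact h
    · exact absurd hy.1 hc
  | head step tail ih =>
    intro h2
    rcases Relation.ReflTransGen.cases_head h2 with h | ⟨y', hy', h2'⟩
    · rw [← h] at hd
      exact absurd step.1 hd
    · have hyy : _ = y' := outDeg_unique step.1.2 step.2 hy'.2
      rw [← hyy] at h2'
      exact ih h2'

/-- chains through subdividing vertices (backward version) are unique. -/
lemma chainT_unique (M : Net V) {a b : V} (ha : ¬ M.Subdividing a) (hb : ¬ M.Subdividing b)
    {p : V} (h1 : Relation.ReflTransGen (fun u w => M.Subdividing w ∧ M.arc u w) a p) :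
    Relation.ReflTransGen (fun u w => M.Subdividing w ∧ M.arc u w) b p → a = b := by
  induction h1 with
  | refl =>
    intro h2
    rcases Relation.ReflTransGen.cases_tail h2 with h | ⟨z, _, hz⟩
    · exact h
    · exact absurd hz.1 ha
  | tail h step ih =>
    intro h2
    rcases Relation.ReflTransGen.cases_tail h2 with h' | ⟨z, hz2, hz⟩
    · exact absurd (h' ▸ step.1) hb
    · have : z = _ := inDeg_unique step.1.1 hz.2 step.2
      rw [this] at hz2
      exact ih hz2

/-- forward decomposition of a path with subdividing interior. -/
lemma chain_S (M : Net V) :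
    ∀ (l : List V) (x v : V), (x :: l).Chain' M.arc → (x :: l).getLast? = some v →
      (∀ w ∈ (x :: l).dropLast, M.Subdividing w) →
      Relation.ReflTransGen (fun a b => M.Subdividing a ∧ M.arc a b) x v
  | [], x, v => by
      intro _ hlast _
      simp at hlast
      rw [hlast]
  | y :: l, x, v => by
      intro hc hlast hsub
      unfold List.Chain' at hc; rw [List.isChain_cons_cons] at hc
      have hsx : M.Subdividing x := hsub x (by rw [List.dropLast_cons₂]; simp)
      have hrec := chain_S M l y v hc.2 (by simpa using hlast)
        (fun w hw => hsub w (by rw [List.dropLast_cons₂]; exact List.mem_cons_of_mem _ hw))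
      exact Relation.ReflTransGen.head ⟨hsx, hc.1⟩ hrec

lemma path_decomp_head (M : Net V) (l : List V) (u v : V)
    (hp : M.IsPathFrom u v l) (hlen : 2 ≤ l.length)
    (hsub : ∀ w ∈ l.tail.dropLast, M.Subdividing w) :
    ∃ w, M.arc u w ∧ Relation.ReflTransGen (fun a b => M.Subdividing a ∧ M.arc a b) w v := by
  obtain ⟨hc, hh, hl⟩ := hp
  match l, hlen with
  | u' :: x :: rest, _ =>
    simp only [List.head?_cons, Option.some.injEq] at hh
    subst hh
    unfold List.Chain' at hc; rw [List.isChain_cons_cons] at hc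
    refine ⟨x, hc.1, chain_S M rest x v hc.2 (by simpa using hl) ?_⟩
    intro w hw
    exact hsub w (by simpa using hw)

/-- backward decomposition of a path with subdividing interior. -/
lemma chain_T (M : Net V) :
    ∀ (l : List V) (u v : V), (u :: l).Chain' M.arc → (u :: l).getLast? = some v →
      1 ≤ l.length → (∀ w ∈ l.dropLast, M.Subdividing w) →
      ∃ w, Relation.ReflTransGen (fun a b => M.Subdividing b ∧ M.arc a b) u w ∧ M.arc w v
  | [], u, v => by
      intro _ _ hlen _
      simp at hlen
  | [y], u, v => by
      intro hc hlast _ _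
      simp at hlast
      subst hlast
      unfold List.Chain' at hc; rw [List.isChain_cons_cons] at hc
      exact ⟨_, Relation.ReflTransGen.refl, hc.1⟩
  | y :: y' :: l, u, v => by
      intro hc hlast _ hsub
      unfold List.Chain' at hc; rw [List.isChain_cons_cons] at hc
      have hsy : M.Subdividing y := hsub y (by rw [List.dropLast_cons₂]; simp)
      obtain ⟨w, hw1, hw2⟩ := chain_T M (y' :: l) y v hc.2 (by simpa using hlast)
        (by simp) (fun w hw => hsub w (by rw [List.dropLast_cons₂]; exact List.mem_cons_of_mem _ hw))
      exact ⟨w, Relation.ReflTransGen.head ⟨hsy, hc.1⟩ hw1, hw2⟩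

lemma path_decomp_last (M : Net V) (l : List V) (u v : V)
    (hp : M.IsPathFrom u v l) (hlen : 2 ≤ l.length)
    (hsub : ∀ w ∈ l.tail.dropLast, M.Subdividing w) :
    ∃ w, Relation.ReflTransGen (fun a b => M.Subdividing b ∧ M.arc a b) u w ∧ M.arc w v := by
  obtain ⟨hc, hh, hl⟩ := hp
  match l, hlen with
  | u' :: x :: rest, _ =>
    simp only [List.head?_cons, Option.some.injEq] at hh
    subst hh
    exact chain_T M (x :: rest) _ v hc hl (by simp) (by simpa using hsub)

end NetAux

end Aux


section Aux2

namespace NetAux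

variable {V : Type*} {N : Net V} {X : Set V}

lemma reach_antisymm_s3 (hN : N.IsPhylo X) {u v : V} (h1 : N.reach u v) (h2 : N.reach v u) :
    u = v := by
  rcases Relation.ReflTransGen.cases_head h1 with h | ⟨x, hx, h1'⟩
  · exact h
  · exact absurd (Relation.ReflTransGen.trans h1' h2) (hN.acyclic hx)

lemma arc_ne (hN : N.IsPhylo X) {u v : V} (h : N.arc u v) : u ≠ v := by
  intro he
  exact hN.acyclic h (by rw [he]; exact Relation.ReflTransGen.refl)

lemma reach_of_chain {r : V → V → Prop} (hr : ∀ a b, r a b → N.reach a b) {x y : V}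
    (h : Relation.ReflTransGen r x y) : N.reach x y := by
  induction h with
  | refl => exact Relation.ReflTransGen.refl
  | tail _ step ih => exact Relation.ReflTransGen.trans ih (hr _ _ step)

lemma visible_child (hN : N.IsPhylo X) {v v' : V} (hvis : N.Visible v)
    (hout : N.outDeg v = 1) (harc : N.arc v v') : N.Visible v' := by
  obtain ⟨hv, y, hy, hall⟩ := hvis
  have hyout : N.outDeg y = 0 := hy.2
  refine ⟨(hN.arc_mem harc).2, y, hy, ?_⟩
  intro l hl
  have hvmem := hall l hl
  have hvy : v ≠ y := by
    intro h
    rw [h, hyout] at hout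
    exact one_ne_zero hout.symm
  obtain ⟨z, hz, hzl⟩ := chain'_mem_succ l hl.1 v hvmem y hl.2.2 hvy
  rwa [outDeg_unique hout harc hz]

lemma visible_parent (hN : N.IsPhylo X) {v p : V} (hvis : N.Visible v)
    (hin : N.inDeg v = 1) (harc : N.arc p v) : N.Visible p := by
  obtain ⟨hv, y, hy, hall⟩ := hvis
  refine ⟨(hN.arc_mem harc).1, y, hy, ?_⟩
  intro l hl
  have hvmem := hall l hl
  have hvr : v ≠ N.root := by
    intro h
    rw [h, hN.root_inDeg] at hin
    exact one_ne_zero hin.symm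
  obtain ⟨z, hz, hzl⟩ := chain'_mem_pred l hl.1 v hvmem N.root hl.2.1 hvr
  rwa [inDeg_unique hin harc hz]

end NetAux

end Aux2

/-- The normalisation `Ñ` of a rooted phylogenetic network has no vertex
whose in-degree and out-degree are both at least 2. -/
theorem stmt3 {V : Type*} (N : Net V) (X : Set V) (hN : N.IsPhylo X) :
    ∀ v : V, ¬ (2 ≤ N.normalise.inDeg v ∧ 2 ≤ N.normalise.outDeg v) := by
  intro v hv
  obtain ⟨hin2, hout2⟩ := hv
  obtain ⟨a, ha, b, hb, hab⟩ := NetAux.two_le_ncard hin2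
  obtain ⟨c, hc, d, hd, hcd⟩ := NetAux.two_le_ncard hout2
  obtain ⟨⟨hVa, hSa⟩, ⟨hVv, hSv⟩, la, hla, hla2, hlasub⟩ := ha
  obtain ⟨⟨hVb, hSb⟩, -, lb, hlb, hlb2, hlbsub⟩ := hb
  obtain ⟨-, ⟨hVc, hSc⟩, lc, hlc, hlc2, hlcsub⟩ := hc
  obtain ⟨-, ⟨hVd, hSd⟩, ld, hld, hld2, hldsub⟩ := hd
  obtain ⟨wa, hTa, hwa⟩ := NetAux.path_decomp_last N.cov la a v hla hla2 hlasub
  obtain ⟨wb, hTb, hwb⟩ := NetAux.path_decomp_last N.cov lb b v hlb hlb2 hlbsub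
  obtain ⟨wc, hwc, hSc'⟩ := NetAux.path_decomp_head N.cov lc v c hlc hlc2 hlcsub
  obtain ⟨wd, hwd, hSd'⟩ := NetAux.path_decomp_head N.cov ld v d hld hld2 hldsub
  -- basic reach facts
  have covreach : ∀ {x y : V}, N.cov.arc x y → N.reach x y := fun h => h.2.2.2.1
  have hrav : N.reach a v :=
    Relation.ReflTransGen.trans
      (NetAux.reach_of_chain (fun _ _ h => covreach h.2) hTa) (covreach hwa)
  have hrvc : N.reach v c :=
    Relation.ReflTransGen.trans (covreach hwc)
      (NetAux.reach_of_chain (fun _ _ h => covreach h.2) hSc')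
  have hav : a ≠ v := by
    intro h
    subst h
    exact hwa.2.2.1 (NetAux.reach_antisymm_s3 hN (covreach hwa)
      (NetAux.reach_of_chain (fun _ _ h => covreach h.2) hTa))
  have hcv : c ≠ v := by
    intro h
    subst h
    exact hwc.2.2.1 (NetAux.reach_antisymm_s3 hN (covreach hwc)
      (NetAux.reach_of_chain (fun _ _ h => covreach h.2) hSc'))
  -- v is in the vertex set
  have hvV : v ∈ N.verts := hVv.1
  -- v has an in-arc and an out-arc in N
  obtain ⟨pa, hpa1, hpa2⟩ : ∃ z, N.reach a z ∧ N.arc z v := by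
    rcases Relation.ReflTransGen.cases_tail hrav with h | h
    · exact absurd h.symm hav
    · exact h
  obtain ⟨xa, hxa1, hxa2⟩ : ∃ z, N.arc v z ∧ N.reach z c := by
    rcases Relation.ReflTransGen.cases_head hrvc with h | h
    · exact absurd h.symm hcv
    · exact h
  -- v is not a leaf
  have houtfin : {w | N.arc v w}.Finite :=
    hN.finite.subset (fun w hw => (hN.arc_mem hw).2)
  have hvX : v ∉ X := by
    intro h
    rw [← hN.leaves_eq] at h
    have h0 : N.outDeg v = 0 := h.2
    have hne : ({w | N.arc v w} : Set V).Nonempty := ⟨xa, hxa1⟩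
    have hpos := (Set.ncard_pos houtfin).mpr hne
    rw [Net.outDeg] at h0
    omega
  -- v is not the root
  have hinfin : {u | N.arc u v}.Finite :=
    hN.finite.subset (fun u hu => (hN.arc_mem hu).1)
  have hvroot : v ≠ N.root := by
    intro h
    have : ({u | N.arc u v} : Set V).Nonempty := ⟨pa, hpa2⟩
    have hpos : 0 < N.inDeg v := (Set.ncard_pos hinfin).mpr this
    rw [h, hN.root_inDeg] at hpos
    exact Nat.lt_irrefl 0 hpos
  rcases hN.interior_deg v hvV hvroot hvX with ⟨hin1, -⟩ | ⟨hout1, -⟩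
  · -- in-degree of v in N is 1 : unique parent p
    obtain ⟨p, hps⟩ := Set.ncard_eq_one.mp hin1
    rw [Set.eq_singleton_iff_unique_mem] at hps
    have hpv : N.arc p v := hps.1
    have hVp : N.Visible p := NetAux.visible_parent hN hVv hin1 hpv
    have hpnv : p ≠ v := NetAux.arc_ne hN hpv
    have hreach_to_p : ∀ {w : V}, N.cov.arc w v → w = p := by
      intro w hw
      have hwv : w ≠ v := hw.2.2.1
      obtain ⟨z, hz1, hz2⟩ : ∃ z, N.reach w z ∧ N.arc z v := by
        rcases Relation.ReflTransGen.cases_tail (covreach hw) with h | h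
        · exact absurd h.symm hwv
        · exact h
      have hzp : z = p := hps.2 z hz2
      rw [hzp] at hz1
      by_contra hne
      exact hw.2.2.2.2 ⟨p, hVp, fun h => hne h.symm, hpnv, hz1,
        Relation.ReflTransGen.single hpv⟩
    have hwap : wa = p := hreach_to_p hwa
    have hwbp : wb = p := hreach_to_p hwb
    rw [hwap] at hTa
    rw [hwbp] at hTb
    exact hab (NetAux.chainT_unique N.cov hSa hSb hTa hTb)
  · -- out-degree of v in N is 1 : unique child v'
    obtain ⟨v', hvs⟩ := Set.ncard_eq_one.mp hout1
    rw [Set.eq_singleton_iff_unique_mem] at hvs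
    have hvv' : N.arc v v' := hvs.1
    have hVv' : N.Visible v' := NetAux.visible_child hN hVv hout1 hvv'
    have hvnv' : v ≠ v' := NetAux.arc_ne hN hvv'
    have hreach_to_c : ∀ {w : V}, N.cov.arc v w → w = v' := by
      intro w hw
      have hwv : v ≠ w := hw.2.2.1
      obtain ⟨z, hz1, hz2⟩ : ∃ z, N.arc v z ∧ N.reach z w := by
        rcases Relation.ReflTransGen.cases_head (covreach hw) with h | h
        · exact absurd h hwv
        · exact h
      have hzv' : z = v' := hvs.2 z hz1
      rw [hzv'] at hz2
      by_contra hne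
      exact hw.2.2.2.2 ⟨v', hVv', fun h => hvnv' h.symm, fun h => hne h.symm,
        Relation.ReflTransGen.single hvv', hz2⟩
    have hwcv : wc = v' := hreach_to_c hwc
    have hwdv : wd = v' := hreach_to_c hwd
    rw [hwcv] at hSc'
    rw [hwdv] at hSd'
    exact hcd (NetAux.chainS_unique N.cov hSc hSd hSc' hSd')
end

section
/- Let N be a rooted phylogenetic network on a finite set X and let Ñ be its normalisation. Then every vertex of Ñ is visible in Ñ; that is, Ñ is a tree-child network. -/
section StmtFiveAux

variable {V : Type*}

/-- Arc relation restricted to avoid a vertex `v`. -/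
private def Avoid (B : V → V → Prop) (v : V) (a b : V) : Prop := B a b ∧ a ≠ v ∧ b ≠ v

private lemma rtg_comp {r s : V → V → Prop} (h : ∀ a b, r a b → Relation.ReflTransGen s a b)
    {u w : V} (hr : Relation.ReflTransGen r u w) : Relation.ReflTransGen s u w := by
  induction hr with
  | refl => exact .refl
  | tail _ hab ih => exact ih.trans (h _ _ hab)

private lemma mem_of_head?' {l : List V} {a : V} (h : l.head? = some a) : a ∈ l := by
  cases l with
  | nil => simp at h
  | cons b t => simp at h; subst h; exact List.mem_cons_self

private lemma pathL_to_rtg {B : V → V → Prop} {v : V} :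
    ∀ (l : List V) (u w : V), l.Chain' B → l.head? = some u → l.getLast? = some w →
      v ∉ l → Relation.ReflTransGen (Avoid B v) u w := by
  intro l
  induction l with
  | nil => intro u w _ h; simp at h
  | cons a t ih =>
    intro u w hch hh hl hv
    have hau : a = u := by simpa using hh
    subst hau
    cases t with
    | nil =>
      have haw : a = w := by simpa using hl
      subst haw; exact .refl
    | cons c t' =>
      replace hch := List.isChain_cons_cons.mp hch
      rw [List.getLast?_cons_cons] at hl
      have hrest : Relation.ReflTransGen (Avoid B v) c w :=
        ih c w hch.2 rfl hl (fun h => hv (List.mem_cons_of_mem _ h))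
      exact Relation.ReflTransGen.head
        ⟨hch.1, fun h => hv (by simp [h]), fun h => hv (by simp [h])⟩ hrest

private lemma rtg_to_pathL {B : V → V → Prop} {v : V} {u w : V}
    (h : Relation.ReflTransGen (Avoid B v) u w) (hu : u ≠ v) :
    ∃ l : List V, l.Chain' B ∧ l.head? = some u ∧ l.getLast? = some w ∧ v ∉ l := by
  revert hu
  induction h using Relation.ReflTransGen.head_induction_on with
  | refl => intro hw; exact ⟨[w], List.isChain_singleton w, by simp, by simp, by simp [Ne.symm hw]⟩
  | @head a c hac hcb ih =>
    intro _
    obtain ⟨l, hch, hh, hl, hv⟩ := ih hac.2.2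
    cases l with
    | nil => simp at hh
    | cons c' t =>
      have hcc : c' = c := by simpa using hh
      have hBac : B a c' := by rw [hcc]; exact hac.1
      refine ⟨a :: c' :: t, List.isChain_cons_cons.mpr ⟨hBac, hch⟩, rfl, ?_, ?_⟩
      · rw [List.getLast?_cons_cons]; exact hl
      · intro hmem
        rcases List.mem_cons.mp hmem with h | h
        · exact hac.2.1 h.symm
        · exact hv h

private lemma mem_split' {l : List V} {a b x : V} (hh : l.head? = some a)
    (hl : l.getLast? = some b) (hx : x ∈ l) : x = a ∨ x = b ∨ x ∈ l.tail.dropLast := by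
  cases l with
  | nil => simp at hx
  | cons a' t =>
    have haa : a' = a := by simpa using hh
    subst haa
    rcases List.mem_cons.mp hx with h | h
    · exact Or.inl h
    · cases t with
      | nil => simp at h
      | cons c t' =>
        rw [List.getLast?_cons_cons] at hl
        have hne : (c :: t') ≠ ([] : List V) := by simp
        have hgl : (c :: t').getLast hne = b := by
          have := List.getLast?_eq_getLast hne
          rw [this] at hl; exact Option.some_injective _ hl
        have hsplit := List.dropLast_append_getLast hne
        rw [← hsplit] at h
        rcases List.mem_append.mp h with h' | h'
        · exact Or.inr (Or.inr h')
        · simp at h'; exact Or.inr (Or.inl (h'.trans hgl))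

private lemma rtg_avoid_of_no_between {B : V → V → Prop} {v b : V} {a : V}
    (h : Relation.ReflTransGen B a b) (ha : a ≠ v)
    (hbet : ∀ x, Relation.ReflTransGen B a x → Relation.ReflTransGen B x b → x ≠ v) :
    Relation.ReflTransGen (Avoid B v) a b := by
  revert ha hbet
  induction h using Relation.ReflTransGen.head_induction_on with
  | refl => intro _ _; exact .refl
  | @head a' c hac hcb ih =>
    intro ha hbet
    have hcv : c ≠ v := hbet c (.single hac) hcb
    exact Relation.ReflTransGen.head ⟨hac, ha, hcv⟩
      (ih hcv (fun x h1 h2 => hbet x ((Relation.ReflTransGen.single hac).trans h1) h2))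

end StmtFiveAux

/-- Every vertex of the normalisation `Ñ` is visible in `Ñ`; that is,
`Ñ` is a tree-child network. -/
theorem stmt5 {V : Type*} (N : Net V) (X : Set V) (hN : N.IsPhylo X) :
    N.normalise.TreeChild := by
  intro v hv
  obtain ⟨hvvis, hvnsub⟩ := hv
  refine ⟨⟨hvvis, hvnsub⟩, ?_⟩
  obtain ⟨hvV, y, hy, hyvis⟩ := hvvis
  have hvvisN : N.Visible v := ⟨hvV, y, hy, hyvis⟩
  obtain ⟨hyverts, hyout0⟩ := hy
  -- y has no outgoing arcs in N
  have hyout : ∀ w, ¬ N.arc y w := by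
    have hfin : {w | N.arc y w}.Finite :=
      hN.finite.subset (fun z hz => (hN.arc_mem hz).2)
    have hemp : {w | N.arc y w} = ∅ := (Set.ncard_eq_zero hfin).mp hyout0
    intro w hw
    have : w ∈ ({w | N.arc y w} : Set V) := hw
    rw [hemp] at this; exact this
  have hyreach : ∀ w, N.reach y w → w = y := by
    intro w hw
    rcases Relation.ReflTransGen.cases_head hw with h | ⟨c, hc, _⟩
    · exact h.symm
    · exact absurd hc (hyout c)
  have hyvisN : N.Visible y :=
    ⟨hyverts, y, ⟨hyverts, hyout0⟩, fun l hl => List.mem_of_getLast? hl.2.2⟩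
  have hycov_out : ∀ w, ¬ N.cov.arc y w := by
    intro w hw
    exact hw.2.2.1 ((hyreach w hw.2.2.2.1).symm)
  have hycovout0 : N.cov.outDeg y = 0 := by
    have hemp : {w | N.cov.arc y w} = ∅ := by
      ext w; simp only [Set.mem_setOf_eq, Set.mem_empty_iff_false, iff_false]
      exact hycov_out w
    rw [Net.outDeg, hemp, Set.ncard_empty]
  have hynsub : ¬ N.cov.Subdividing y := by
    intro h; exact zero_ne_one (hycovout0.symm.trans h.2)
  have hynorm_out0 : N.normalise.outDeg y = 0 := by
    have hemp : {w | N.normalise.arc y w} = ∅ := by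
      ext w; simp only [Set.mem_setOf_eq, Set.mem_empty_iff_false, iff_false]
      rintro ⟨-, -, m, ⟨hch, hh, -⟩, hlen, -⟩
      match m, hh, hlen with
      | (a :: c :: t), hh, _ =>
        have : a = y := by simpa using hh
        subst this
        exact hycov_out c (List.isChain_cons_cons.mp hch).1
    rw [Net.outDeg, hemp, Set.ncard_empty]
  refine ⟨y, ⟨⟨hyvisN, hynsub⟩, hynorm_out0⟩, ?_⟩
  intro l hl
  by_contra hvl
  obtain ⟨hch, hh, hlast⟩ := hl
  have hrootv : N.root ≠ v := fun h => hvl (h ▸ mem_of_head?' hh)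
  have h1 : Relation.ReflTransGen (Avoid N.normalise.arc v) N.root y :=
    pathL_to_rtg l N.root y hch hh hlast hvl
  -- step A : normalise-arcs avoiding v refine into cov-paths avoiding v
  have stepA : ∀ a b, Avoid N.normalise.arc v a b →
      Relation.ReflTransGen (Avoid N.cov.arc v) a b := by
    rintro a b ⟨⟨-, -, m, ⟨hch', hh', hl'⟩, -, hsub⟩, hav, hbv⟩
    have hvm : v ∉ m := by
      intro hvm
      rcases mem_split' hh' hl' hvm with h | h | h
      · exact hav h.symm
      · exact hbv h.symm
      · exact hvnsub (hsub v h)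
    exact pathL_to_rtg m a b hch' hh' hl' hvm
  -- step B : cov-arcs avoiding v refine into N-paths avoiding v
  have stepB : ∀ a b, Avoid N.cov.arc v a b →
      Relation.ReflTransGen (Avoid N.arc v) a b := by
    rintro a b ⟨⟨-, -, -, hreach, hnob⟩, hav, hbv⟩
    refine rtg_avoid_of_no_between hreach hav ?_
    intro x hx1 hx2 hxv
    exact hnob ⟨v, hvvisN, Ne.symm hav, Ne.symm hbv, hxv ▸ hx1, hxv ▸ hx2⟩
  have h2 : Relation.ReflTransGen (Avoid N.arc v) N.root y :=
    rtg_comp stepB (rtg_comp stepA h1)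
  obtain ⟨P, hchP, hhP, hlP, hvP⟩ := rtg_to_pathL h2 hrootv
  exact hvP (hyvis P ⟨hchP, hhP, hlP⟩)
end
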